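/- arXiv:0804.1399 — 8 statements merged into one kernel-verified Lean document; each statement's English description precedes it below -/
import Mathlib

section
/- Let 0 < ε < 1/2. The function μ ↦ g(ε, μ) is monotonically increasing on (0, 1/2 - ε) and monotonically decreasing on (1/2, 1 - ε). -/
open Real Set

-- sharp upper bound: log x < (x^2-1)/(2x) for x > 1
lemma aux_log_lt {x : ℝ} (hx : 1 < x) : Real.log x < (x^2 - 1) / (2*x) := by
  have h : StrictMonoOn (fun y : ℝ => (y^2 - 1)/(2*y) - Real.log y) (Set.Ici 1) := by
    apply strictMonoOn_of_deriv_pos (convex_Ici 1)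
    · apply ContinuousOn.sub
      · apply ContinuousOn.div
        · fun_prop
        · fun_prop
        · intro y hy; simp only [Set.mem_Ici] at hy; positivity
      · apply Real.continuousOn_log.mono
        intro y hy; simp only [Set.mem_Ici] at hy
        simp; positivity
    · intro y hy
      rw [interior_Ici] at hy
      simp only [Set.mem_Ioi] at hy
      have hy0 : (0:ℝ) < y := by linarith
      have hd : HasDerivAt (fun y : ℝ => (y^2 - 1)/(2*y) - Real.log y)
          ((y-1)^2/(2*y^2)) y := by
        have h1 : HasDerivAt (fun y : ℝ => (y^2 - 1)/(2*y)) ((2*y*(2*y) - (y^2-1)*2)/(2*y)^2) y := by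
          have ha : HasDerivAt (fun y : ℝ => y^2 - 1) (2*y) y := by
            simpa using ((hasDerivAt_pow 2 y).sub_const 1)
          have hb : HasDerivAt (fun y : ℝ => 2*y) 2 y := by
            simpa using (hasDerivAt_id y).const_mul 2
          exact ha.div hb (by positivity)
        have h2 := h1.sub (Real.hasDerivAt_log hy0.ne')
        refine h2.congr_deriv ?_
        field_simp
        ring
      rw [hd.deriv]
      apply div_pos (by nlinarith) (by positivity)
  have := h (Set.self_mem_Ici) (by exact Set.mem_Ici.mpr hx.le) hx
  simp only [Real.log_one] at this
  norm_num at this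
  linarith

-- sharp lower bound: 2(x-1)/(x+1) < log x for x > 1
lemma aux_lt_log {x : ℝ} (hx : 1 < x) : 2*(x-1)/(x+1) < Real.log x := by
  have h : StrictMonoOn (fun y : ℝ => Real.log y - 2*(y-1)/(y+1)) (Set.Ici 1) := by
    apply strictMonoOn_of_deriv_pos (convex_Ici 1)
    · apply ContinuousOn.sub
      · apply Real.continuousOn_log.mono
        intro y hy; simp only [Set.mem_Ici] at hy
        simp; positivity
      · apply ContinuousOn.div
        · fun_prop
        · fun_prop
        · intro y hy; simp only [Set.mem_Ici] at hy; positivity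
    · intro y hy
      rw [interior_Ici] at hy
      simp only [Set.mem_Ioi] at hy
      have hy0 : (0:ℝ) < y := by linarith
      have hd : HasDerivAt (fun y : ℝ => Real.log y - 2*(y-1)/(y+1))
          ((y-1)^2/(y*(y+1)^2)) y := by
        have h1 : HasDerivAt (fun y : ℝ => 2*(y-1)/(y+1)) ((2*(y+1) - 2*(y-1)*1)/(y+1)^2) y := by
          have ha : HasDerivAt (fun y : ℝ => 2*(y-1)) 2 y := by
            simpa using ((hasDerivAt_id y).sub_const 1).const_mul 2
          have hb : HasDerivAt (fun y : ℝ => y+1) 1 y := (hasDerivAt_id y).add_const 1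
          exact ha.div hb (by positivity)
        have h2 := (Real.hasDerivAt_log hy0.ne').sub h1
        refine h2.congr_deriv ?_
        field_simp
        ring
      rw [hd.deriv]
      apply div_pos (by nlinarith) (by positivity)
  have := h (Set.self_mem_Ici) (by exact Set.mem_Ici.mpr hx.le) hx
  simp only [Real.log_one] at this
  norm_num at this
  linarith

lemma aux_deriv (ε : ℝ) (hε : 0 < ε) {x : ℝ} (hx0 : 0 < x) (hx1 : x < 1 - ε) :
    HasDerivAt (fun μ : ℝ => (μ + ε) * Real.log (μ / (μ + ε)) +
        (1 - μ - ε) * Real.log ((1 - μ) / (1 - μ - ε)))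
      (ε / (x * (1-x)) - Real.log ((x+ε)*(1-x)/(x*(1-x-ε)))) x := by
  have hxε : 0 < x + ε := by linarith
  have h1x : 0 < 1 - x := by linarith
  have h1xε : 0 < 1 - x - ε := by linarith
  have hg : HasDerivAt (fun μ : ℝ => (μ + ε) * (Real.log μ - Real.log (μ + ε)) +
        (1 - μ - ε) * (Real.log (1 - μ) - Real.log (1 - μ - ε)))
      ((1 * (Real.log x - Real.log (x+ε)) + (x+ε) * (1/x - 1/(x+ε))) +
       ((-1) * (Real.log (1-x) - Real.log (1-x-ε)) + (1-x-ε) * ((-1)/(1-x) - (-1)/(1-x-ε)))) x := by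
    have hid : HasDerivAt (fun μ : ℝ => μ + ε) 1 x := (hasDerivAt_id x).add_const ε
    have hone : HasDerivAt (fun μ : ℝ => 1 - μ - ε) (-1) x := by
      simpa using (((hasDerivAt_id x).const_sub 1).sub_const ε)
    have h1m : HasDerivAt (fun μ : ℝ => 1 - μ) (-1) x := by
      simpa using ((hasDerivAt_id x).const_sub 1)
    have hlog1 : HasDerivAt (fun μ : ℝ => Real.log μ) (1/x) x := by
      simpa using Real.hasDerivAt_log hx0.ne'
    have hlog2 : HasDerivAt (fun μ : ℝ => Real.log (μ + ε)) (1/(x+ε)) x := hid.log hxε.ne'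
    have hlog3 : HasDerivAt (fun μ : ℝ => Real.log (1 - μ)) ((-1)/(1-x)) x := h1m.log h1x.ne'
    have hlog4 : HasDerivAt (fun μ : ℝ => Real.log (1 - μ - ε)) ((-1)/(1-x-ε)) x := hone.log h1xε.ne'
    exact (hid.mul (hlog1.sub hlog2)).add (hone.mul (hlog3.sub hlog4))
  have heq : (fun μ : ℝ => (μ + ε) * Real.log (μ / (μ + ε)) +
        (1 - μ - ε) * Real.log ((1 - μ) / (1 - μ - ε))) =ᶠ[nhds x]
      (fun μ : ℝ => (μ + ε) * (Real.log μ - Real.log (μ + ε)) +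
        (1 - μ - ε) * (Real.log (1 - μ) - Real.log (1 - μ - ε))) := by
    filter_upwards [isOpen_Ioo.mem_nhds (show x ∈ Set.Ioo 0 (1-ε) from ⟨hx0, hx1⟩)] with μ hμ
    obtain ⟨hμ0, hμ1⟩ := hμ
    rw [Real.log_div hμ0.ne' (by linarith), Real.log_div (by linarith) (by linarith)]
  have := hg.congr_of_eventuallyEq heq
  refine this.congr_deriv ?_
  rw [Real.log_div (by positivity) (by positivity), Real.log_mul hxε.ne' h1x.ne',
      Real.log_mul hx0.ne' h1xε.ne']
  field_simp
  ring

theorem stmt_4 (ε : ℝ) (hε : 0 < ε) (hε2 : ε < 1 / 2) :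
    StrictMonoOn (fun μ : ℝ => (μ + ε) * Real.log (μ / (μ + ε)) +
        (1 - μ - ε) * Real.log ((1 - μ) / (1 - μ - ε))) (Set.Ioo 0 (1 / 2 - ε)) ∧
    StrictAntiOn (fun μ : ℝ => (μ + ε) * Real.log (μ / (μ + ε)) +
        (1 - μ - ε) * Real.log ((1 - μ) / (1 - μ - ε))) (Set.Ioo (1 / 2) (1 - ε)) := by
  constructor
  · apply strictMonoOn_of_deriv_pos (convex_Ioo _ _)
    · intro x hx
      obtain ⟨hx0, hx1⟩ := hx
      exact (aux_deriv ε hε hx0 (by linarith)).differentiableAt.continuousAt.continuousWithinAt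
    · rw [interior_Ioo]
      intro x hx
      obtain ⟨hx0, hx1⟩ := hx
      have hx1' : x < 1 - ε := by linarith
      rw [(aux_deriv ε hε hx0 hx1').deriv]
      have hxε : 0 < x + ε := by linarith
      have h1x : 0 < 1 - x := by linarith
      have h1xε : 0 < 1 - x - ε := by linarith
      set A := x * (1 - x - ε) with hA
      set B := (x + ε) * (1 - x) with hB
      have hA0 : 0 < A := by positivity
      have hB0 : 0 < B := by positivity
      have hR1 : 1 < B / A := by
        rw [lt_div_iff₀ hA0]
        nlinarith
      have hlog := aux_log_lt hR1
      have hle : ((B/A)^2 - 1) / (2*(B/A)) ≤ ε / (x * (1-x)) := by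
        have h2 : ((B/A)^2 - 1) / (2*(B/A)) = (B^2 - A^2) / (2*A*B) := by
          field_simp
        rw [h2, div_le_div_iff₀ (by positivity) (by positivity)]
        have hBA : B - A = ε := by rw [hA, hB]; ring
        have hP : 0 < x*(1-x) := by positivity
        have key : (A+B)*(x*(1-x)) ≤ 2*(A*B) := by
          have ha1 : A + B = 2*(x*(1-x)) + ε*(1-2*x) := by rw [hA, hB]; ring
          have ha2 : A*B = (x*(1-x))*((x+ε)*(1-x-ε)) := by rw [hA, hB]; ring
          have ha3 : 2*(x*(1-x)) + ε*(1-2*x) ≤ 2*((x+ε)*(1-x-ε)) := by nlinarith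
          rw [ha1, ha2]
          nlinarith [hP]
        have h3 : B^2 - A^2 = ε*(A+B) := by linear_combination (B+A)*hBA
        rw [h3]
        nlinarith [mul_le_mul_of_nonneg_left key hε.le]
      have : Real.log (B/A) < ε / (x * (1-x)) := lt_of_lt_of_le hlog hle
      linarith
  · apply strictAntiOn_of_deriv_neg (convex_Ioo _ _)
    · intro x hx
      obtain ⟨hx0, hx1⟩ := hx
      exact (aux_deriv ε hε (by linarith) hx1).differentiableAt.continuousAt.continuousWithinAt
    · rw [interior_Ioo]
      intro x hx
      obtain ⟨hx0, hx1⟩ := hx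
      have hx0' : 0 < x := by linarith
      rw [(aux_deriv ε hε hx0' hx1).deriv]
      have hxε : 0 < x + ε := by linarith
      have h1x : 0 < 1 - x := by linarith
      have h1xε : 0 < 1 - x - ε := by linarith
      set A := x * (1 - x - ε) with hA
      set B := (x + ε) * (1 - x) with hB
      have hA0 : 0 < A := by positivity
      have hB0 : 0 < B := by positivity
      have hR1 : 1 < B / A := by
        rw [lt_div_iff₀ hA0]
        nlinarith
      have hlog := aux_lt_log hR1
      have hle : ε / (x * (1-x)) ≤ 2*(B/A - 1)/(B/A + 1) := by
        have h2 : 2*(B/A - 1)/(B/A + 1) = 2*(B - A)/(B + A) := by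
          field_simp
        rw [h2, div_le_div_iff₀ (by positivity) (by positivity)]
        have hBA : B - A = ε := by rw [hA, hB]; ring
        have key : B + A ≤ 2*(x*(1-x)) := by
          have ha1 : A + B = 2*(x*(1-x)) + ε*(1-2*x) := by rw [hA, hB]; ring
          nlinarith
        rw [hBA]
        nlinarith [mul_le_mul_of_nonneg_left key hε.le]
      have : ε / (x * (1-x)) < Real.log (B/A) := lt_of_le_of_lt hle hlog
      linarith
end

section
/- Let 0 < ε < 1/2. The function μ ↦ g(-ε, μ) is monotonically increasing on (ε, 1/2) and monotonically decreasing on (1/2 + ε, 1). -/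
lemma memcompl : Set.Ici (1:ℝ) ⊆ {0}ᶜ := by
  intro x hx
  simp only [Set.mem_Ici] at hx
  simp only [Set.mem_compl_iff, Set.mem_singleton_iff]
  intro h; rw [h] at hx; linarith

lemma aux1 (t : ℝ) (ht : 1 < t) : 2*(t-1)/(t+1) < Real.log t := by
  have key : StrictMonoOn (fun x : ℝ => Real.log x - 2*(x-1)/(x+1)) (Set.Ici 1) := by
    apply strictMonoOn_of_deriv_pos (convex_Ici 1)
    · apply ContinuousOn.sub
      · exact Real.continuousOn_log.mono memcompl
      · apply ContinuousOn.div (by fun_prop) (by fun_prop)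
        intro x hx; simp only [Set.mem_Ici] at hx; intro h; linarith
    · intro x hx
      rw [interior_Ici] at hx
      have hx1 : (1:ℝ) < x := hx
      have hx0 : (0:ℝ) < x := by linarith
      have hne : x + 1 ≠ 0 := by linarith
      have hd : HasDerivAt (fun x : ℝ => Real.log x - 2*(x-1)/(x+1))
          (1/x - (2*(x+1) - 2*(x-1)*1)/(x+1)^2) x := by
        have h1 : HasDerivAt (fun x : ℝ => Real.log x) (1/x) x := by
          simpa using Real.hasDerivAt_log hx0.ne'
        have h2 : HasDerivAt (fun x : ℝ => 2*(x-1)) 2 x := by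
          simpa using (((hasDerivAt_id x).sub_const 1).const_mul 2)
        have h3 : HasDerivAt (fun x : ℝ => x+1) 1 x := (hasDerivAt_id x).add_const 1
        exact h1.sub (h2.div h3 hne)
      rw [hd.deriv]
      have heq : 1/x - (2*(x+1) - 2*(x-1)*1)/(x+1)^2 = (x-1)^2/(x*(x+1)^2) := by
        field_simp; ring
      rw [heq]
      exact div_pos (pow_pos (by linarith) 2) (by positivity)
  have h0 := key (Set.self_mem_Ici) (Set.mem_Ici.2 ht.le) ht
  simp only [Real.log_one] at h0
  linarith

lemma aux2 (s : ℝ) (hs : 1 < s) : 2 * Real.log s < s - 1/s := by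
  have key : StrictMonoOn (fun x : ℝ => x - 1/x - 2 * Real.log x) (Set.Ici 1) := by
    apply strictMonoOn_of_deriv_pos (convex_Ici 1)
    · apply ContinuousOn.sub
      · apply ContinuousOn.sub (by fun_prop)
        apply ContinuousOn.div (by fun_prop) (by fun_prop)
        intro x hx; simp only [Set.mem_Ici] at hx; intro h; linarith
      · exact continuousOn_const.mul (Real.continuousOn_log.mono memcompl)
    · intro x hx
      rw [interior_Ici] at hx
      have hx1 : (1:ℝ) < x := hx
      have hx0 : (0:ℝ) < x := by linarith
      have hd : HasDerivAt (fun x : ℝ => x - 1/x - 2 * Real.log x)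
          (1 - (0*x - 1*1)/x^2 - 2 * (1/x)) x := by
        have h1 : HasDerivAt (fun x : ℝ => Real.log x) (1/x) x := by
          simpa using Real.hasDerivAt_log hx0.ne'
        have h2 : HasDerivAt (fun x : ℝ => (1:ℝ)/x) ((0*x - 1*1)/x^2) x :=
          (hasDerivAt_const x 1).div (hasDerivAt_id x) hx0.ne'
        exact ((hasDerivAt_id x).sub h2).sub (h1.const_mul 2)
      rw [hd.deriv]
      have heq : 1 - (0*x - 1*1)/x^2 - 2*(1/x) = (x-1)^2/x^2 := by
        field_simp; ring
      rw [heq]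
      exact div_pos (pow_pos (by linarith) 2) (by positivity)
  have h0 := key (Set.self_mem_Ici) (Set.mem_Ici.2 hs.le) hs
  simp only [Real.log_one, one_div] at h0 ⊢
  linarith

lemma logmean_lower (a b : ℝ) (ha : 0 < a) (hab : a < b) :
    2*(b-a)/(a+b) < Real.log b - Real.log a := by
  have hb : 0 < b := ha.trans hab
  have ht : 1 < b/a := (one_lt_div ha).2 hab
  have h := aux1 _ ht
  rw [Real.log_div hb.ne' ha.ne'] at h
  have hne1 : a ≠ 0 := ha.ne'
  have hne2 : a + b ≠ 0 := by positivity
  have hne3 : b/a + 1 ≠ 0 := by positivity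
  have heq : 2*(b/a-1)/(b/a+1) = 2*(b-a)/(a+b) := by
    field_simp
    ring
  linarith [heq ▸ h]

lemma logmean_upper (a b : ℝ) (ha : 0 < a) (hab : a < b) :
    Real.log b - Real.log a < (b-a)/Real.sqrt (a*b) := by
  have hb : 0 < b := ha.trans hab
  set s := Real.sqrt (b/a) with hsdef
  have hs0 : 0 < s := Real.sqrt_pos.2 (by positivity)
  have hs2 : s^2 = b/a := Real.sq_sqrt (by positivity)
  have hs : 1 < s := by
    nlinarith [(one_lt_div ha).2 hab]
  have hsab : Real.sqrt (a*b) = a * s := by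
    rw [hsdef, ← Real.sqrt_sq ha.le, ← Real.sqrt_mul (by positivity)]
    congr 1; field_simp; ring
    exact Real.sq_sqrt (by positivity)
  have hlog : Real.log b - Real.log a = 2 * Real.log s := by
    rw [← Real.log_div hb.ne' ha.ne', ← hs2, Real.log_pow]
    push_cast; ring
  have h := aux2 s hs
  rw [hlog, hsab]
  have hb' : a * s^2 = b := by rw [hs2]; field_simp
  have heq : s - 1/s = (b-a)/(a*s) := by
    rw [eq_div_iff (mul_pos ha hs0).ne']
    field_simp
    nlinarith [hb']
  linarith [heq ▸ h]

theorem stmt_5 (ε : ℝ) (hε : 0 < ε) (hε2 : ε < 1 / 2) :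
    StrictMonoOn (fun μ : ℝ => (μ - ε) * Real.log (μ / (μ - ε)) +
        (1 - μ + ε) * Real.log ((1 - μ) / (1 - μ + ε))) (Set.Ioo ε (1 / 2)) ∧
    StrictAntiOn (fun μ : ℝ => (μ - ε) * Real.log (μ / (μ - ε)) +
        (1 - μ + ε) * Real.log ((1 - μ) / (1 - μ + ε))) (Set.Ioo (1 / 2 + ε) 1) := by
  set f : ℝ → ℝ := fun μ => (μ - ε) * Real.log (μ / (μ - ε)) +
      (1 - μ + ε) * Real.log ((1 - μ) / (1 - μ + ε)) with hf_def
  set g : ℝ → ℝ := fun μ => (μ - ε) * (Real.log μ - Real.log (μ - ε)) +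
      (1 - μ + ε) * (Real.log (1 - μ) - Real.log (1 - μ + ε)) with hg_def
  set D : ℝ → ℝ := fun x => (Real.log x + Real.log (1 - x + ε))
      - (Real.log (x - ε) + Real.log (1 - x)) - ε / (x * (1 - x)) with hD_def
  have hopen : IsOpen (Set.Ioo ε (1:ℝ)) := isOpen_Ioo
  have heqOn : ∀ x ∈ Set.Ioo ε (1:ℝ), f x = g x := by
    intro x hx
    obtain ⟨hx1, hx2⟩ := hx
    have hx0 : (0:ℝ) < x := hε.trans hx1
    have hxε : (0:ℝ) < x - ε := by linarith
    have h1x : (0:ℝ) < 1 - x := by linarith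
    have h1xe : (0:ℝ) < 1 - x + ε := by linarith
    simp only [hf_def, hg_def]
    rw [Real.log_div hx0.ne' hxε.ne', Real.log_div h1x.ne' h1xe.ne']
  have hfd : ∀ x ∈ Set.Ioo ε (1:ℝ), HasDerivAt f (D x) x := by
    intro x hx
    obtain ⟨hx1, hx2⟩ := hx
    have hx0 : (0:ℝ) < x := hε.trans hx1
    have hxε : (0:ℝ) < x - ε := by linarith
    have h1x : (0:ℝ) < 1 - x := by linarith
    have h1xe : (0:ℝ) < 1 - x + ε := by linarith
    have hA : HasDerivAt (fun μ : ℝ => μ - ε) 1 x := (hasDerivAt_id x).sub_const ε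
    have hB : HasDerivAt (fun μ : ℝ => 1 - μ + ε) (-1) x := by
      simpa using (((hasDerivAt_const x (1:ℝ)).sub (hasDerivAt_id x)).add_const ε)
    have hC : HasDerivAt (fun μ : ℝ => 1 - μ) (-1) x := by
      exact (hasDerivAt_id' x).const_sub 1
    have hL1 : HasDerivAt (fun μ : ℝ => Real.log μ) x⁻¹ x := Real.hasDerivAt_log hx0.ne'
    have hL2 : HasDerivAt (fun μ : ℝ => Real.log (μ - ε)) (1 / (x - ε)) x := hA.log hxε.ne'
    have hL3 : HasDerivAt (fun μ : ℝ => Real.log (1 - μ)) ((-1) / (1 - x)) x := hC.log h1x.ne'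
    have hL4 : HasDerivAt (fun μ : ℝ => Real.log (1 - μ + ε)) ((-1) / (1 - x + ε)) x :=
      hB.log h1xe.ne'
    have hg' : HasDerivAt g
        (1 * (Real.log x - Real.log (x - ε)) + (x - ε) * (x⁻¹ - 1 / (x - ε))
          + ((-1) * (Real.log (1 - x) - Real.log (1 - x + ε))
            + (1 - x + ε) * ((-1) / (1 - x) - (-1) / (1 - x + ε)))) x :=
      (hA.mul (hL1.sub hL2)).add (hB.mul (hL3.sub hL4))
    have heval : 1 * (Real.log x - Real.log (x - ε)) + (x - ε) * (x⁻¹ - 1 / (x - ε))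
          + ((-1) * (Real.log (1 - x) - Real.log (1 - x + ε))
            + (1 - x + ε) * ((-1) / (1 - x) - (-1) / (1 - x + ε))) = D x := by
      simp only [hD_def]
      field_simp
      ring
    rw [heval] at hg'
    have hev : f =ᶠ[nhds x] g :=
      Filter.eventuallyEq_of_mem (hopen.mem_nhds ⟨hx1, hx2⟩) heqOn
    exact hg'.congr_of_eventuallyEq hev
  constructor
  · apply strictMonoOn_of_deriv_pos (convex_Ioo _ _)
    · intro x hx
      have hx' : x ∈ Set.Ioo ε (1:ℝ) := ⟨hx.1, by have := hx.2; linarith⟩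
      exact (hfd x hx').continuousAt.continuousWithinAt
    · intro x hx
      rw [interior_Ioo] at hx
      obtain ⟨hx1, hx2⟩ := hx
      have hx' : x ∈ Set.Ioo ε (1:ℝ) := ⟨hx1, by linarith⟩
      rw [(hfd x hx').deriv]
      have hx0 : (0:ℝ) < x := hε.trans hx1
      have hxε : (0:ℝ) < x - ε := by linarith
      have h1x : (0:ℝ) < 1 - x := by linarith
      have h1xe : (0:ℝ) < 1 - x + ε := by linarith
      set a : ℝ := (x - ε) * (1 - x) with ha_def
      set b : ℝ := x * (1 - x + ε) with hb_def
      set q : ℝ := x * (1 - x) with hq_def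
      have ha : 0 < a := mul_pos hxε h1x
      have hq : 0 < q := mul_pos hx0 h1x
      have hba : b = a + ε := by rw [ha_def, hb_def]; ring
      have hab : a < b := by rw [hba]; linarith
      have hlog := logmean_lower a b ha hab
      have hbma : b - a = ε := by rw [hba]; ring
      rw [hbma] at hlog
      have hloga : Real.log a = Real.log (x - ε) + Real.log (1 - x) :=
        Real.log_mul hxε.ne' h1x.ne'
      have hlogb : Real.log b = Real.log x + Real.log (1 - x + ε) :=
        Real.log_mul hx0.ne' h1xe.ne'
      have habp : 0 < a + b := by linarith
      have hcmp : ε / q < 2 * ε / (a + b) := by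
        rw [div_lt_div_iff₀ hq habp]
        have : a + b < 2 * q := by rw [ha_def, hb_def, hq_def]; nlinarith
        nlinarith
      simp only [hD_def]
      rw [← hq_def]
      linarith [hlog, hloga ▸ hlogb ▸ hlog]
  · apply strictAntiOn_of_deriv_neg (convex_Ioo _ _)
    · intro x hx
      have hx' : x ∈ Set.Ioo ε (1:ℝ) := ⟨by have := hx.1; linarith, hx.2⟩
      exact (hfd x hx').continuousAt.continuousWithinAt
    · intro x hx
      rw [interior_Ioo] at hx
      obtain ⟨hx1, hx2⟩ := hx
      have hx' : x ∈ Set.Ioo ε (1:ℝ) := ⟨by linarith, hx2⟩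
      rw [(hfd x hx').deriv]
      have hx0 : (0:ℝ) < x := by linarith
      have hxε : (0:ℝ) < x - ε := by linarith
      have h1x : (0:ℝ) < 1 - x := by linarith
      have h1xe : (0:ℝ) < 1 - x + ε := by linarith
      set a : ℝ := (x - ε) * (1 - x) with ha_def
      set b : ℝ := x * (1 - x + ε) with hb_def
      set q : ℝ := x * (1 - x) with hq_def
      have ha : 0 < a := mul_pos hxε h1x
      have hq : 0 < q := mul_pos hx0 h1x
      have hba : b = a + ε := by rw [ha_def, hb_def]; ring
      have hab : a < b := by rw [hba]; linarith
      have hlog := logmean_upper a b ha hab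
      have hbma : b - a = ε := by rw [hba]; ring
      rw [hbma] at hlog
      have hloga : Real.log a = Real.log (x - ε) + Real.log (1 - x) :=
        Real.log_mul hxε.ne' h1x.ne'
      have hlogb : Real.log b = Real.log x + Real.log (1 - x + ε) :=
        Real.log_mul hx0.ne' h1xe.ne'
      have hprod : q^2 < a * b := by
        have : a * b = q^2 + ε * q * (2*x - 1 - ε) := by
          rw [ha_def, hb_def, hq_def]; ring
        rw [this]
        have h2x : 0 < 2*x - 1 - ε := by linarith
        nlinarith [mul_pos (mul_pos hε hq) h2x]
      have hsq : q < Real.sqrt (a * b) := by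
        have := Real.sqrt_lt_sqrt (by positivity : (0:ℝ) ≤ q^2) hprod
        rwa [Real.sqrt_sq hq.le] at this
      have hcmp : ε / Real.sqrt (a * b) < ε / q := div_lt_div_of_pos_left hε hq hsq
      simp only [hD_def]
      rw [← hq_def]
      linarith [hlog, hloga ▸ hlogb ▸ hlog]
end

section
/- For 0 < ε < min(μ, 1 - μ), the derivative with respect to ε of the difference g(ε, μ) - g(-ε, μ) equals ln(1 + ε²(1 - 2μ)/((μ² - ε²)(1 - μ)²)). -/
open Real

lemma aux_deriv_s6 (a b : ℝ) (ha : 0 < a) (hab : 0 < a + b) :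
    HasDerivAt (fun e : ℝ => (a + e) * Real.log (a / (a + e)))
      (Real.log (a / (a + b)) - 1) b := by
  have h1 : HasDerivAt (fun e : ℝ => a + e) 1 b := (hasDerivAt_id b).const_add a
  have h2 : HasDerivAt (fun e : ℝ => a / (a + e)) (-(a / (a + b) ^ 2)) b := by
    have := (show HasDerivAt (fun e : ℝ => a / (a + e)) _ b from (hasDerivAt_const b a).div h1 hab.ne')
    convert this using 1
    field_simp
    ring
  have h3 : HasDerivAt (fun e : ℝ => Real.log (a / (a + e)))
      (-(a / (a + b) ^ 2) / (a / (a + b))) b := h2.log (by positivity)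
  have := (show HasDerivAt (fun e : ℝ => (a + e) * Real.log (a / (a + e))) _ b from h1.mul h3)
  convert this using 1
  field_simp
  ring

theorem stmt_6 (ε μ : ℝ) (hε : 0 < ε) (hεμ : ε < min μ (1 - μ)) :
    deriv (fun e : ℝ =>
        ((μ + e) * Real.log (μ / (μ + e)) + (1 - μ - e) * Real.log ((1 - μ) / (1 - μ - e)))
          - ((μ - e) * Real.log (μ / (μ - e)) + (1 - μ + e) * Real.log ((1 - μ) / (1 - μ + e)))) ε
      = Real.log (1 + ε ^ 2 * (1 - 2 * μ) / ((μ ^ 2 - ε ^ 2) * (1 - μ) ^ 2)) := by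
  have hεμ1 : ε < μ := lt_of_lt_of_le hεμ (min_le_left _ _)
  have hεμ2 : ε < 1 - μ := lt_of_lt_of_le hεμ (min_le_right _ _)
  have hμ : 0 < μ := hε.trans hεμ1
  have h1μ : 0 < 1 - μ := hε.trans hεμ2
  have hA : 0 < μ + ε := by linarith
  have hB : 0 < μ - ε := by linarith
  have hC : 0 < 1 - μ - ε := by linarith
  have hD : 0 < 1 - μ + ε := by linarith
  have ht1 : HasDerivAt (fun e : ℝ => (μ + e) * Real.log (μ / (μ + e)))
      (Real.log (μ / (μ + ε)) - 1) ε := aux_deriv_s6 μ ε hμ hA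
  have ht4 : HasDerivAt (fun e : ℝ => (1 - μ + e) * Real.log ((1 - μ) / (1 - μ + e)))
      (Real.log ((1 - μ) / (1 - μ + ε)) - 1) ε := aux_deriv_s6 (1 - μ) ε h1μ hD
  have ht2 : HasDerivAt (fun e : ℝ => (1 - μ - e) * Real.log ((1 - μ) / (1 - μ - e)))
      ((Real.log ((1 - μ) / (1 - μ - ε)) - 1) * (-1)) ε := by
    have h := (show
      HasDerivAt (fun e : ℝ => (1 - μ + -e) * Real.log ((1 - μ) / (1 - μ + -e))) _ ε from (aux_deriv_s6 (1 - μ) (-ε) h1μ (by linarith)).comp ε (hasDerivAt_neg ε))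
    convert h using 2 <;> ring_nf
  have ht3 : HasDerivAt (fun e : ℝ => (μ - e) * Real.log (μ / (μ - e)))
      ((Real.log (μ / (μ - ε)) - 1) * (-1)) ε := by
    have h := (show
      HasDerivAt (fun e : ℝ => (μ + -e) * Real.log (μ / (μ + -e))) _ ε from (aux_deriv_s6 μ (-ε) hμ (by linarith)).comp ε (hasDerivAt_neg ε))
    convert h using 2 <;> ring_nf
  have hderiv := ((show HasDerivAt (fun e : ℝ =>
        ((μ + e) * Real.log (μ / (μ + e)) + (1 - μ - e) * Real.log ((1 - μ) / (1 - μ - e)))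
          - ((μ - e) * Real.log (μ / (μ - e)) + (1 - μ + e) * Real.log ((1 - μ) / (1 - μ + e)))) _ ε from (ht1.add ht2).sub (ht3.add ht4))).deriv
  rw [hderiv]
  have harg : 1 + ε ^ 2 * (1 - 2 * μ) / ((μ ^ 2 - ε ^ 2) * (1 - μ) ^ 2)
      = (μ / (μ + ε)) * (μ / (μ - ε)) * (((1 - μ - ε) / (1 - μ)) * ((1 - μ + ε) / (1 - μ))) := by
    have hAB : μ ^ 2 - ε ^ 2 ≠ 0 := by nlinarith
    field_simp
    ring
  rw [harg, Real.log_mul (by positivity) (by positivity),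
    Real.log_mul (by positivity) (by positivity),
    Real.log_mul (by positivity) (by positivity),
    Real.log_div hμ.ne' hA.ne', Real.log_div hμ.ne' hB.ne',
    Real.log_div hC.ne' h1μ.ne', Real.log_div hD.ne' h1μ.ne',
    Real.log_div h1μ.ne' hC.ne', Real.log_div h1μ.ne' hD.ne']
  ring
end

section
/- Let 0 < ε < 1. The function μ ↦ g(εμ, μ) is monotonically decreasing on (0, 1/(1+ε)). -/
open Real Set

theorem stmt_10 (ε : ℝ) (hε : 0 < ε) (hε1 : ε < 1) :
    StrictAntiOn (fun μ : ℝ =>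
        (μ + ε * μ) * Real.log (μ / (μ + ε * μ)) +
        (1 - μ - ε * μ) * Real.log ((1 - μ) / (1 - μ - ε * μ)))
      (Set.Ioo 0 (1 / (1 + ε))) := by
  set c : ℝ := 1 + ε with hc
  have hc1 : 1 < c := by simp [hc]; linarith
  have hc0 : 0 < c := by linarith
  set F : ℝ → ℝ := fun μ =>
    -(c * μ) * Real.log c +
      ((1 - c * μ) * Real.log (1 - μ) - (1 - c * μ) * Real.log (1 - c * μ)) with hF
  -- bounds for points in the interval
  have hbnd : ∀ μ ∈ Set.Ioo (0:ℝ) (1 / c), 0 < 1 - c * μ ∧ 1 - c * μ < 1 - μ ∧ 1 - μ < 1 := by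
    intro μ hμ
    obtain ⟨h0, h1⟩ := hμ
    have hcμ : c * μ < 1 := by
      have := (lt_div_iff₀ hc0).mp h1
      linarith [this]
    refine ⟨by linarith, ?_, by linarith⟩
    nlinarith
  -- derivative of F
  have hder : ∀ μ ∈ Set.Ioo (0:ℝ) (1 / c),
      HasDerivAt F
        (-c * Real.log c + ((-c) * Real.log (1 - μ) + (1 - c * μ) * (-1 / (1 - μ))
          - ((-c) * Real.log (1 - c * μ) + (1 - c * μ) * (-c / (1 - c * μ))))) μ := by
    intro μ hμ
    obtain ⟨hb, hba, ha1⟩ := hbnd μ hμ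
    have ha : 0 < 1 - μ := lt_trans hb hba
    have h1 : HasDerivAt (fun μ : ℝ => -(c * μ) * Real.log c) (-c * Real.log c) μ := by
      have := (((hasDerivAt_id μ).const_mul c).neg).mul_const (Real.log c)
      simpa using this
    have hlog1 : HasDerivAt (fun μ : ℝ => Real.log (1 - μ)) (-1 / (1 - μ)) μ := by
      have := (((hasDerivAt_id μ).const_sub 1)).log (ne_of_gt ha)
      simpa using this
    have hlog2 : HasDerivAt (fun μ : ℝ => Real.log (1 - c * μ)) (-c / (1 - c * μ)) μ := by
      have := (((hasDerivAt_id μ).const_mul c).const_sub 1).log (ne_of_gt hb)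
      simpa using this
    have hlin : HasDerivAt (fun μ : ℝ => 1 - c * μ) (-c) μ := by
      have := ((hasDerivAt_id μ).const_mul c).const_sub 1
      simpa using this
    exact h1.add ((hlin.mul hlog1).sub (hlin.mul hlog2))
  -- derivative is negative
  have hneg : ∀ μ ∈ Set.Ioo (0:ℝ) (1 / c),
      (-c * Real.log c + ((-c) * Real.log (1 - μ) + (1 - c * μ) * (-1 / (1 - μ))
          - ((-c) * Real.log (1 - c * μ) + (1 - c * μ) * (-c / (1 - c * μ))))) < 0 := by
    intro μ hμ
    obtain ⟨hb, hba, ha1⟩ := hbnd μ hμ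
    have ha : 0 < 1 - μ := lt_trans hb hba
    set a : ℝ := 1 - μ with hae
    set b : ℝ := 1 - c * μ with hbe
    have hu : 1 < c * a / b := by
      rw [lt_div_iff₀ hb]
      nlinarith
    set u : ℝ := c * a / b with hue
    have hu0 : 0 < u := by positivity
    have hlogu : Real.log u = Real.log c + Real.log a - Real.log b := by
      rw [hue, Real.log_div (by positivity) (ne_of_gt hb), Real.log_mul (ne_of_gt hc0) (ne_of_gt ha)]
    have hkey : Real.log u⁻¹ < u⁻¹ - 1 :=
      Real.log_lt_sub_one_of_pos (by positivity) (by
        intro h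
        have : u = 1 := by
          field_simp at h
          linarith [h]
        linarith)
    rw [Real.log_inv] at hkey
    have h2 : 1 - Real.log u < u⁻¹ := by linarith
    have h3 : c * (1 - Real.log u) < c * u⁻¹ := by
      exact (mul_lt_mul_iff_right₀ hc0).mpr h2
    have h4 : c * u⁻¹ = b / a := by
      rw [hue]
      field_simp
    rw [h4] at h3
    have hsimp : (-c * Real.log c + ((-c) * Real.log a + b * (-1 / a)
          - ((-c) * Real.log b + b * (-c / b)))) = c * (1 - Real.log u) - b / a := by
      rw [hlogu]
      field_simp
      ring
    rw [hsimp]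
    linarith
  have hkeyF : StrictAntiOn F (Set.Ioo 0 (1 / c)) := by
    apply strictAntiOn_of_deriv_neg (convex_Ioo _ _)
    · intro x hx
      exact (hder x hx).continuousAt.continuousWithinAt
    · intro x hx
      rw [interior_Ioo] at hx
      rw [(hder x hx).deriv]
      exact hneg x hx
  have heq : ∀ μ ∈ Set.Ioo (0:ℝ) (1 / c),
      (μ + ε * μ) * Real.log (μ / (μ + ε * μ)) +
        (1 - μ - ε * μ) * Real.log ((1 - μ) / (1 - μ - ε * μ)) = F μ := by
    intro μ hμ
    obtain ⟨hb, hba, ha1⟩ := hbnd μ hμ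
    have hμ0 : 0 < μ := hμ.1
    have ha : 0 < 1 - μ := lt_trans hb hba
    have e1 : μ + ε * μ = c * μ := by rw [hc]; ring
    have e2 : 1 - μ - ε * μ = 1 - c * μ := by rw [hc]; ring
    rw [e1, e2]
    have e3 : μ / (c * μ) = 1 / c := by
      field_simp
    rw [e3, Real.log_div (ne_of_gt ha) (ne_of_gt hb), one_div, Real.log_inv]
    simp only [hF]
    ring
  intro x hx y hy hxy
  simp only
  rw [heq x hx, heq y hy]
  exact hkeyF hx hy hxy
end

section
/- Let 0 < ε < 1. The function μ ↦ g(-εμ, μ) is monotonically decreasing on (0, 1). -/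
open Real Set

theorem stmt_11 (ε : ℝ) (hε : 0 < ε) (hε1 : ε < 1) :
    StrictAntiOn (fun μ : ℝ =>
        (μ - ε * μ) * Real.log (μ / (μ - ε * μ)) +
        (1 - μ + ε * μ) * Real.log ((1 - μ) / (1 - μ + ε * μ)))
      (Set.Ioo 0 1) := by
  set c : ℝ := 1 - ε with hc
  have hc0 : 0 < c := by simp [hc]; linarith
  have hc1 : c < 1 := by simp [hc]; linarith
  set F : ℝ → ℝ := fun μ =>
      c * μ * (-Real.log c) + (1 - c * μ) * (Real.log (1 - μ) - Real.log (1 - c * μ)) with hF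
  have hDF : ∀ x ∈ Set.Ioo (0:ℝ) 1, HasDerivAt F
      (c * (-Real.log c) +
        ((-c) * (Real.log (1 - x) - Real.log (1 - c * x)) +
          (1 - c * x) * ((-1) / (1 - x) - (-c) / (1 - c * x)))) x := by
    intro x hx
    obtain ⟨hx0, hx1⟩ := hx
    have h1x : (0:ℝ) < 1 - x := by linarith
    have hcx : c * x < x := by nlinarith
    have h1cx : (0:ℝ) < 1 - c * x := by linarith
    have d1 : HasDerivAt (fun μ : ℝ => c * μ * (-Real.log c)) (c * (-Real.log c)) x := by
      simpa [mul_comm, mul_assoc] using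
        ((hasDerivAt_id x).const_mul c).mul_const (-Real.log c)
    have du : HasDerivAt (fun μ : ℝ => 1 - c * μ) (-c) x := by
      simpa using ((hasDerivAt_id x).const_mul c).const_sub 1
    have dl1 : HasDerivAt (fun μ : ℝ => Real.log (1 - μ)) ((-1) / (1 - x)) x := by
      have : HasDerivAt (fun μ : ℝ => 1 - μ) (-1) x := by
        simpa using (hasDerivAt_id x).const_sub 1
      exact this.log (by linarith)
    have dl2 : HasDerivAt (fun μ : ℝ => Real.log (1 - c * μ)) ((-c) / (1 - c * x)) x :=
      du.log (by linarith)
    exact d1.add (du.mul (dl1.sub dl2))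
  have key : StrictAntiOn F (Set.Ioo 0 1) := by
    apply strictAntiOn_of_deriv_neg (convex_Ioo 0 1)
    · exact fun x hx => ((hDF x hx).differentiableAt).continuousAt.continuousWithinAt
    · intro x hx
      rw [interior_Ioo] at hx
      obtain ⟨hx0, hx1⟩ := hx
      have h1x : (0:ℝ) < 1 - x := by linarith
      have hcx : c * x < x := by nlinarith
      have h1cx : (0:ℝ) < 1 - c * x := by linarith
      rw [(hDF x ⟨hx0, hx1⟩).deriv]
      set t : ℝ := (1 - c * x) / (1 - x) with ht
      have ht1 : 1 < t := by
        rw [ht, lt_div_iff₀ h1x]; linarith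
      have hlt : Real.log (t / c) < t / c - 1 := by
        apply Real.log_lt_sub_one_of_pos (by positivity)
        intro h
        have : t = c := by field_simp at h; linarith
        linarith
      have hlog : Real.log (t / c) = Real.log (1 - c * x) - Real.log (1 - x) - Real.log c := by
        rw [ht, Real.log_div (by positivity) (by positivity),
          Real.log_div (by linarith) (by linarith)]
      have hmul : c * Real.log (t / c) < t - c := by
        have := mul_lt_mul_of_pos_left hlt hc0
        calc c * Real.log (t / c) < c * (t / c - 1) := this
          _ = t - c := by field_simp
      rw [hlog] at hmul
      have htx : (1 - c * x) * ((-1) / (1 - x) - (-c) / (1 - c * x)) = -t + c := by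
        rw [ht]; field_simp; ring
      rw [htx]
      nlinarith [hmul]
  intro a ha b hb hab
  have eqF : ∀ x ∈ Set.Ioo (0:ℝ) 1,
      (x - ε * x) * Real.log (x / (x - ε * x)) +
        (1 - x + ε * x) * Real.log ((1 - x) / (1 - x + ε * x)) = F x := by
    intro x hx
    obtain ⟨hx0, hx1⟩ := hx
    have hcx : c * x < x := by nlinarith
    have h1cx : (0:ℝ) < 1 - c * x := by linarith
    have hcx0 : (0:ℝ) < c * x := by positivity
    have e1 : x - ε * x = c * x := by rw [hc]; ring
    have e2 : (1:ℝ) - x + ε * x = 1 - c * x := by rw [hc]; ring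
    rw [e1, e2, hF]
    have l1 : Real.log (x / (c * x)) = -Real.log c := by
      rw [Real.log_div (by linarith) (by linarith), Real.log_mul (by linarith) (by linarith)]
      ring
    have l2 : Real.log ((1 - x) / (1 - c * x)) = Real.log (1 - x) - Real.log (1 - c * x) :=
      Real.log_div (by linarith) (by linarith)
    rw [l1, l2]
  calc _ = F b := eqF b hb
    _ < F a := key ha hb hab
    _ = _ := (eqF a ha).symm
end

section
/- Suppose 0 < ε_r < 1 and 0 < ε_a/ε_r + ε_a ≤ 1/2. Let X₁, ..., Xₙ be i.i.d. [0,1]-valued random variables with mean μ satisfying 0 < μ ≤ ε_a/ε_r, and let μ̂ be their sample mean. Then Pr{μ̂ ≤ μ - ε_a} ≤ exp(n·g(-ε_a, ε_a/ε_r)), where g(δ, ν) = (ν+δ)·ln(ν/(ν+δ)) + (1-ν-δ)·ln((1-ν)/(1-ν-δ)). -/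
open MeasureTheory ProbabilityTheory

lemma pade_log {x : ℝ} (hx : 1 ≤ x) : 2 * (x - 1) / (x + 1) ≤ Real.log x := by
  set f : ℝ → ℝ := fun z => Real.log z - 2 * (z - 1) / (z + 1) with hf
  have hderiv : ∀ y : ℝ, 0 < y → HasDerivAt f (1 / y - 4 / (y + 1) ^ 2) y := by
    intro y hy
    have hy1 : y + 1 ≠ 0 := by linarith
    have h1 : HasDerivAt Real.log (1 / y) y := by
      simpa [one_div] using Real.hasDerivAt_log hy.ne'
    have h2 : HasDerivAt (fun z : ℝ => 2 * (z - 1)) 2 y := by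
      simpa using ((hasDerivAt_id y).sub_const 1).const_mul 2
    have h3 : HasDerivAt (fun z : ℝ => z + 1) 1 y := (hasDerivAt_id y).add_const 1
    have h4 := h2.div h3 hy1
    have h5 : HasDerivAt f (1 / y - (2 * (y + 1) - 2 * (y - 1) * 1) / (y + 1) ^ 2) y :=
      h1.sub (by simpa [Pi.div_def] using h4)
    have he : (2 * (y + 1) - 2 * (y - 1) * 1) = 4 := by ring
    rw [he] at h5
    exact h5
  have hmono : MonotoneOn f (Set.Ici (1 : ℝ)) := by
    apply monotoneOn_of_deriv_nonneg (convex_Ici 1)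
    · intro y hy
      exact (hderiv y (by simp at hy; linarith)).continuousAt.continuousWithinAt
    · intro y hy
      rw [interior_Ici] at hy
      simp only [Set.mem_Ioi] at hy
      exact (hderiv y (by linarith)).differentiableAt.differentiableWithinAt
    · intro y hy
      rw [interior_Ici] at hy
      simp only [Set.mem_Ioi] at hy
      have hy0 : (0 : ℝ) < y := by linarith
      rw [(hderiv y hy0).deriv]
      rw [sub_nonneg, div_le_div_iff₀ (by positivity) hy0]
      nlinarith [sq_nonneg (y - 1)]
  have h0 : f 1 ≤ f x := hmono (by simp) (by simpa using hx) hx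
  have : f 1 = 0 := by simp [hf]
  rw [this] at h0
  simp only [hf, sub_nonneg] at h0
  linarith

set_option maxHeartbeats 1000000 in
theorem stmt_16 (εa εr : ℝ) (hεa : 0 < εa) (hεa1 : εa < 1) (hεr : 0 < εr) (hεr1 : εr < 1)
    (hc : εa / εr + εa ≤ 1 / 2)
    {Ω : Type*} [MeasurableSpace Ω] (P : Measure Ω) [IsProbabilityMeasure P]
    (n : ℕ) (hn : 0 < n) (X : Fin n → Ω → ℝ)
    (hmeas : ∀ i, Measurable (X i))
    (hindep : iIndepFun X P)
    (hident : ∀ i j, IdentDistrib (X i) (X j) P P)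
    (hbound : ∀ i ω, X i ω ∈ Set.Icc (0 : ℝ) 1)
    (μ : ℝ) (hμ : 0 < μ) (hμ2 : μ ≤ εa / εr) (hmean : ∀ i, ∫ ω, X i ω ∂P = μ) :
    P {ω | (∑ i, X i ω) / n ≤ μ - εa}
      ≤ ENNReal.ofReal (Real.exp (n *
          ((εa / εr + -εa) * Real.log ((εa / εr) / (εa / εr + -εa)) +
           (1 - εa / εr - -εa) * Real.log ((1 - εa / εr) / (1 - εa / εr - -εa))))) := by
  simp only [← sub_eq_add_neg, sub_neg_eq_add]
  set ν : ℝ := εa / εr with hνdef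
  have hν0 : 0 < ν := by positivity
  have haν : εa < ν := by
    rw [hνdef, lt_div_iff₀ hεr]
    nlinarith
  have hν2 : ν < 1 / 2 := by linarith
  have ha : 0 < ν - εa := by linarith
  have hb : 0 < 1 - ν := by linarith
  have hcp : 0 < 1 - ν + εa := by linarith
  have hμν : μ ≤ ν := hμ2
  have hμ1 : μ < 1 := by linarith
  set r : ℝ := (ν - εa) * (1 - ν) / (ν * (1 - ν + εa)) with hrdef
  have hr0 : 0 < r := by positivity
  have hr1 : r < 1 := by
    rw [hrdef, div_lt_one (by positivity)]
    nlinarith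
  set s : ℝ := -Real.log r with hsdef
  have hs0 : 0 < s := by
    rw [hsdef, neg_pos]
    exact Real.log_neg hr0 hr1
  have hexp : Real.exp (-s) = r := by
    rw [hsdef, neg_neg, Real.exp_log hr0]
  clear_value ν r s
  -- integrability
  have hXint : ∀ i, Integrable (X i) P := by
    intro i
    refine (integrable_const (1 : ℝ)).mono' (hmeas i).aestronglyMeasurable ?_
    filter_upwards with ω
    obtain ⟨h0, h1⟩ := hbound i ω
    rw [Real.norm_eq_abs, abs_le]
    constructor <;> linarith
  have hEint : ∀ i, Integrable (fun ω => Real.exp (-s * X i ω)) P := by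
    intro i
    refine (integrable_const (1 : ℝ)).mono'
      (((hmeas i).const_mul _).exp.aestronglyMeasurable) ?_
    filter_upwards with ω
    obtain ⟨h0, h1⟩ := hbound i ω
    rw [Real.norm_eq_abs, abs_of_pos (Real.exp_pos _)]
    calc Real.exp (-s * X i ω) ≤ Real.exp 0 := Real.exp_le_exp.2 (by nlinarith)
      _ = 1 := Real.exp_zero
  have hSint : Integrable (fun ω => Real.exp (-s * ∑ i, X i ω)) P := by
    refine (integrable_const (1 : ℝ)).mono'
      ((((Finset.measurable_sum Finset.univ fun i _ => hmeas i)).const_mul _).exp.aestronglyMeasurable) ?_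
    filter_upwards with ω
    have hsum : 0 ≤ ∑ i, X i ω := Finset.sum_nonneg fun i _ => (hbound i ω).1
    rw [Real.norm_eq_abs, abs_of_pos (Real.exp_pos _)]
    calc Real.exp (-s * ∑ i, X i ω) ≤ Real.exp 0 := Real.exp_le_exp.2 (by nlinarith)
      _ = 1 := Real.exp_zero
  -- per-factor mgf bound
  have hmgf : ∀ i, mgf (X i) P (-s) ≤ 1 - μ + μ * r := by
    intro i
    have hpt : ∀ ω, Real.exp (-s * X i ω) ≤ 1 - X i ω + X i ω * r := by
      intro ω
      obtain ⟨h0, h1⟩ := hbound i ω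
      have hcv := convexOn_exp.2 (Set.mem_univ (0 : ℝ)) (Set.mem_univ (-s))
        (by linarith : (0 : ℝ) ≤ 1 - X i ω) h0 (by ring)
      simp only [smul_eq_mul, mul_zero, zero_add, Real.exp_zero] at hcv
      calc Real.exp (-s * X i ω) = Real.exp (X i ω * (-s)) := by rw [mul_comm]
        _ ≤ (1 - X i ω) * 1 + X i ω * Real.exp (-s) := hcv
        _ = 1 - X i ω + X i ω * r := by rw [hexp]; ring
    have hint2 : Integrable (fun ω => 1 - X i ω + X i ω * r) P :=
      ((integrable_const (1 : ℝ)).sub (hXint i)).add ((hXint i).mul_const r)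
    calc mgf (X i) P (-s) = ∫ ω, Real.exp (-s * X i ω) ∂P := rfl
      _ ≤ ∫ ω, (1 - X i ω + X i ω * r) ∂P := integral_mono (hEint i) hint2 hpt
      _ = 1 - μ + μ * r := by
          have i1 : Integrable (fun ω => 1 - X i ω) P := (integrable_const 1).sub (hXint i)
          have i2 : Integrable (fun ω => X i ω * r) P := (hXint i).mul_const r
          rw [integral_add i1 i2, integral_sub (integrable_const 1) (hXint i),
            integral_mul_const, hmean i, integral_const]
          simp
  -- Chernoff bound
  have hchern := measure_le_le_exp_mul_mgf (μ := P) (X := fun ω => ∑ i, X i ω)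
    ((n : ℝ) * (μ - εa)) (neg_nonpos.mpr hs0.le) hSint
  have hSeq : (fun ω => ∑ i, X i ω) = ∑ i, X i := by
    ext ω; simp
  have hmgfS : mgf (fun ω => ∑ i, X i ω) P (-s) = ∏ i, mgf (X i) P (-s) := by
    rw [hSeq]; exact hindep.mgf_sum hmeas Finset.univ
  have hA : 0 < 1 - μ + μ * r := by nlinarith
  have hAν : 0 < 1 - ν + ν * r := by nlinarith
  have hprod : ∏ i : Fin n, mgf (X i) P (-s) ≤ (1 - μ + μ * r) ^ n := by
    calc ∏ i : Fin n, mgf (X i) P (-s) ≤ ∏ _i : Fin n, (1 - μ + μ * r) :=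
        Finset.prod_le_prod (fun i _ => mgf_nonneg) (fun i _ => hmgf i)
      _ = (1 - μ + μ * r) ^ n := by simp
  -- monotonicity of the exponent in μ
  have hsge : (1 - r) / (1 - ν + ν * r) ≤ s := by
    have h1 : 2 * (1 / r - 1) / (1 / r + 1) ≤ Real.log (1 / r) :=
      pade_log (by rw [le_div_iff₀ hr0]; linarith)
    have h2 : Real.log (1 / r) = s := by rw [one_div, Real.log_inv, hsdef]
    have h3 : 2 * (1 / r - 1) / (1 / r + 1) = 2 * (1 - r) / (1 + r) := by
      rw [div_eq_div_iff (by positivity) (by positivity)]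
      field_simp
    have h4 : (1 - r) / (1 - ν + ν * r) ≤ 2 * (1 - r) / (1 + r) := by
      rw [div_le_div_iff₀ hAν (by linarith)]
      nlinarith [mul_nonneg (mul_nonneg (by linarith : (0:ℝ) ≤ 1 - r) (by linarith : (0:ℝ) ≤ 1 - r)) (by linarith : (0:ℝ) ≤ 1 - 2*ν)]
    rw [h3] at h1
    rw [h2] at h1
    linarith
  have hkey : s * (μ - εa) + Real.log (1 - μ + μ * r)
      ≤ s * (ν - εa) + Real.log (1 - ν + ν * r) := by
    have hlog : Real.log (1 - μ + μ * r) - Real.log (1 - ν + ν * r)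
        ≤ (1 - μ + μ * r) / (1 - ν + ν * r) - 1 := by
      rw [← Real.log_div hA.ne' hAν.ne']
      exact Real.log_le_sub_one_of_pos (by positivity)
    have h5 : (1 - μ + μ * r) / (1 - ν + ν * r) - 1
        = (ν - μ) * ((1 - r) / (1 - ν + ν * r)) := by
      field_simp
      ring
    have h6 : (ν - μ) * ((1 - r) / (1 - ν + ν * r)) ≤ (ν - μ) * s :=
      mul_le_mul_of_nonneg_left hsge (by linarith)
    nlinarith
  -- value of the exponent at ν
  have hval : s * (ν - εa) + Real.log (1 - ν + ν * r)
      = (ν - εa) * Real.log (ν / (ν - εa))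
        + (1 - ν + εa) * Real.log ((1 - ν) / (1 - ν + εa)) := by
    have hAνeq : 1 - ν + ν * r = (1 - ν) / (1 - ν + εa) := by
      rw [hrdef]
      field_simp
      ring
    rw [hAνeq, hsdef, hrdef,
      Real.log_div (by positivity : (0:ℝ) < (ν - εa) * (1 - ν)).ne' (by positivity : (0:ℝ) < ν * (1 - ν + εa)).ne',
      Real.log_mul ha.ne' hb.ne', Real.log_mul hν0.ne' hcp.ne',
      Real.log_div hν0.ne' ha.ne', Real.log_div hb.ne' hcp.ne']
    ring
  -- assemble
  have hsets : {ω | (∑ i, X i ω) / (n : ℝ) ≤ μ - εa}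
      = {ω | (∑ i, X i ω) ≤ (n : ℝ) * (μ - εa)} := by
    ext ω
    simp only [Set.mem_setOf_eq]
    rw [div_le_iff₀ (by exact_mod_cast hn : (0 : ℝ) < (n : ℝ)), mul_comm]
  have hAn : (1 - μ + μ * r) ^ n = Real.exp ((n : ℝ) * Real.log (1 - μ + μ * r)) := by
    rw [Real.exp_nat_mul, Real.exp_log hA]
  have hfinal : (P {ω | (∑ i, X i ω) ≤ (n : ℝ) * (μ - εa)}).toReal
      ≤ Real.exp ((n : ℝ) * ((ν - εa) * Real.log (ν / (ν - εa))
        + (1 - ν + εa) * Real.log ((1 - ν) / (1 - ν + εa)))) := by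
    calc (P {ω | (∑ i, X i ω) ≤ (n : ℝ) * (μ - εa)}).toReal
        ≤ Real.exp (-(-s) * ((n : ℝ) * (μ - εa))) * mgf (fun ω => ∑ i, X i ω) P (-s) := hchern
      _ = Real.exp (s * ((n : ℝ) * (μ - εa))) * ∏ i, mgf (X i) P (-s) := by
          rw [hmgfS, neg_neg]
      _ ≤ Real.exp (s * ((n : ℝ) * (μ - εa))) * (1 - μ + μ * r) ^ n := by
          exact mul_le_mul_of_nonneg_left hprod (Real.exp_pos _).le
      _ = Real.exp ((n : ℝ) * (s * (μ - εa) + Real.log (1 - μ + μ * r))) := by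
          rw [hAn, ← Real.exp_add]
          ring_nf
      _ ≤ Real.exp ((n : ℝ) * (s * (ν - εa) + Real.log (1 - ν + ν * r))) := by
          apply Real.exp_le_exp.2
          apply mul_le_mul_of_nonneg_left hkey (by positivity)
      _ = _ := by rw [hval]
  rw [hsets, ← ENNReal.ofReal_toReal (measure_ne_top P _)]
  exact ENNReal.ofReal_le_ofReal hfinal
end

section
/- Suppose 0 < ε_r < 1 and 0 < ε_a/ε_r + ε_a ≤ 1/2. Let X₁, ..., Xₙ be i.i.d. [0,1]-valued random variables with mean μ satisfying ε_a/ε_r < μ < 1, and let μ̂ be their sample mean. Then Pr{μ̂ ≥ (1 + ε_r)μ} ≤ exp(n·g(ε_a, ε_a/ε_r)), where g(δ, ν) = (ν+δ)·ln(ν/(ν+δ)) + (1-ν-δ)·ln((1-ν)/(1-ν-δ)). -/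
open MeasureTheory ProbabilityTheory Real

lemma key_real (ν εr μ p E : ℝ) (hν : 0 < ν) (hεr : 0 < εr) (hεr1 : εr < 1)
    (hp : p = ν * (1 + εr)) (hE : E = p * (1 - ν) / (ν * (1 - p)))
    (hc : p ≤ 1 / 2) (hμ : ν < μ) (hμ2 : μ < 1) :
    Real.exp (-(Real.log E) * ((1 + εr) * μ)) * (1 - μ + μ * E)
      ≤ Real.exp (p * Real.log (ν / p) + (1 - p) * Real.log ((1 - ν) / (1 - p))) := by
  have hp0 : 0 < p := by nlinarith
  have h1p : 0 < 1 - p := by linarith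
  have hνp : ν < p := by nlinarith
  have h1ν : 0 < 1 - ν := by linarith
  have h1p' : (1 : ℝ) - ν * (1 + εr) ≠ 0 := by rw [← hp]; exact h1p.ne'
  have hμ0 : 0 < μ := lt_trans hν hμ
  have hE0 : 0 < E := by rw [hE]; positivity
  have hE1 : 1 < E := by
    rw [hE, lt_div_iff₀ (by positivity)]
    nlinarith
  have ht : 0 < Real.log E := Real.log_pos hE1
  have hD : 1 - ν + ν * E = (1 - ν) / (1 - p) := by
    rw [hE]; field_simp; ring
  have hD0 : 0 < 1 - ν + ν * E := by rw [hD]; positivity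
  have hDgoal : 0 < 1 - μ + μ * E := by nlinarith
  have hEm1 : E - 1 = (p - ν) / (ν * (1 - p)) := by
    rw [hE]; field_simp; ring
  have hratio : (E - 1) / (1 - ν + ν * E) = εr / (1 - ν) := by
    rw [hEm1, hD, hp]; field_simp [hν.ne', h1ν.ne', h1p']; ring
  have hEeq : E = (1 + εr) * ((1 - ν) / (1 - p)) := by
    rw [hE, hp]; field_simp [hν.ne', h1ν.ne', h1p']
  have ht_eq : Real.log E = Real.log (1 + εr) + Real.log ((1 - ν) / (1 - p)) := by
    rw [hEeq, Real.log_mul (by positivity) (by positivity)]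
  have hlog1 : εr ≤ Real.log (1 + εr) * (1 + εr) := by
    have h := Real.log_le_sub_one_of_pos (x := (1 + εr)⁻¹) (by positivity)
    rw [Real.log_inv] at h
    have he : (1:ℝ) - (1 + εr)⁻¹ = εr / (1 + εr) := by field_simp; ring
    have h2 : εr / (1 + εr) ≤ Real.log (1 + εr) := by linarith
    calc εr = εr / (1 + εr) * (1 + εr) := by field_simp
    _ ≤ _ := by apply mul_le_mul_of_nonneg_right h2; linarith
  have hlog2 : ν * εr ≤ Real.log ((1 - ν) / (1 - p)) * (1 - ν) := by
    have h := Real.log_le_sub_one_of_pos (x := (1 - p) / (1 - ν)) (by positivity)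
    have hinv : Real.log ((1 - p) / (1 - ν)) = - Real.log ((1 - ν) / (1 - p)) := by
      rw [← Real.log_inv]; congr 1; field_simp
    rw [hinv] at h
    have h2 : 1 - (1 - p) / (1 - ν) ≤ Real.log ((1 - ν) / (1 - p)) := by linarith
    have h3 : ν * εr / (1 - ν) ≤ Real.log ((1 - ν) / (1 - p)) := by
      refine le_trans (le_of_eq ?_) h2
      rw [hp]; field_simp
      ring
    calc ν * εr = ν * εr / (1 - ν) * (1 - ν) := by field_simp
    _ ≤ _ := mul_le_mul_of_nonneg_right h3 h1ν.le
  have hA : (E - 1) / (1 - ν + ν * E) ≤ Real.log E * (1 + εr) := by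
    rw [hratio, div_le_iff₀ h1ν, ht_eq]
    have hv0 : 0 ≤ Real.log ((1 - ν) / (1 - p)) :=
      Real.log_nonneg (by rw [le_div_iff₀ h1p]; linarith)
    have hv1 : 0 ≤ Real.log (1 + εr) := Real.log_nonneg (by linarith)
    nlinarith [hlog1, hlog2, hv0, hv1]
  have hL : Real.log (1 - μ + μ * E) ≤
      Real.log (1 - ν + ν * E) + (μ - ν) * ((E - 1) / (1 - ν + ν * E)) := by
    have hq : 0 < (1 - μ + μ * E) / (1 - ν + ν * E) := by positivity
    have h := Real.log_le_sub_one_of_pos hq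
    rw [Real.log_div hDgoal.ne' hD0.ne'] at h
    have he : (1 - μ + μ * E) / (1 - ν + ν * E) - 1
        = (μ - ν) * ((E - 1) / (1 - ν + ν * E)) := by
      field_simp; ring
    linarith
  have hG : p * Real.log (ν / p) + (1 - p) * Real.log ((1 - ν) / (1 - p))
      = -(Real.log E * p) + Real.log (1 - ν + ν * E) := by
    rw [hD, hE, Real.log_div (by positivity : (p * (1 - ν)) ≠ 0) (by positivity : (ν * (1 - p)) ≠ 0),
      Real.log_mul hp0.ne' h1ν.ne', Real.log_mul hν.ne' h1p.ne',
      Real.log_div hν.ne' hp0.ne', Real.log_div h1ν.ne' h1p.ne']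
    ring
  rw [show (1 - μ + μ * E) = Real.exp (Real.log (1 - μ + μ * E)) from
    (Real.exp_log hDgoal).symm, ← Real.exp_add, Real.exp_le_exp, hG]
  have hμν : 0 ≤ μ - ν := by linarith
  have hstep := mul_le_mul_of_nonneg_left hA hμν
  have hfin : -(Real.log E) * ((1 + εr) * μ) + (μ - ν) * (Real.log E * (1 + εr))
      = -(Real.log E * p) := by rw [hp]; ring
  linarith

open MeasureTheory ProbabilityTheory Real

theorem stmt_17 (εa εr : ℝ) (hεa : 0 < εa) (hεa1 : εa < 1) (hεr : 0 < εr) (hεr1 : εr < 1)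
    (hc : εa / εr + εa ≤ 1 / 2)
    {Ω : Type*} [MeasurableSpace Ω] (P : Measure Ω) [IsProbabilityMeasure P]
    (n : ℕ) (hn : 0 < n) (X : Fin n → Ω → ℝ)
    (hmeas : ∀ i, Measurable (X i))
    (hindep : iIndepFun (m := fun _ => Real.measurableSpace) X P)
    (hident : ∀ i j, IdentDistrib (X i) (X j) P P)
    (hbound : ∀ i ω, X i ω ∈ Set.Icc (0 : ℝ) 1)
    (μ : ℝ) (hμ : εa / εr < μ) (hμ2 : μ < 1) (hmean : ∀ i, ∫ ω, X i ω ∂P = μ) :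
    P {ω | (1 + εr) * μ ≤ (∑ i, X i ω) / n}
      ≤ ENNReal.ofReal (Real.exp (n *
          ((εa / εr + εa) * Real.log ((εa / εr) / (εa / εr + εa)) +
           (1 - εa / εr - εa) * Real.log ((1 - εa / εr) / (1 - εa / εr - εa))))) := by
  have hν : 0 < εa / εr := div_pos hεa hεr
  have hp : εa / εr + εa = (εa / εr) * (1 + εr) := by field_simp
  have hp0 : 0 < εa / εr + εa := by positivity
  have h1p : 0 < 1 - (εa / εr + εa) := by linarith
  have h1ν : 0 < 1 - εa / εr := by linarith
  have hμ0 : 0 < μ := lt_trans hν hμ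
  set E : ℝ := (εa / εr + εa) * (1 - εa / εr) / ((εa / εr) * (1 - (εa / εr + εa))) with hE_def
  have hE0 : 0 < E := by positivity
  have hE1 : 1 < E := by
    rw [hE_def, lt_div_iff₀ (by positivity)]; nlinarith
  set t : ℝ := Real.log E with ht_def
  have ht : 0 < t := Real.log_pos hE1
  have hEt : Real.exp t = E := Real.exp_log hE0
  -- key per-sample bound
  have hkey := key_real (εa / εr) εr μ (εa / εr + εa) E hν hεr hεr1 hp hE_def hc hμ hμ2
  have hn' : (0:ℝ) < (n:ℝ) := Nat.cast_pos.2 hn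
  -- rewrite event
  have hset : {ω | (1 + εr) * μ ≤ (∑ i, X i ω) / n}
      = {ω | (n:ℝ) * ((1 + εr) * μ) ≤ (∑ i, X i) ω} := by
    ext ω
    simp only [Set.mem_setOf_eq, Finset.sum_apply]
    rw [le_div_iff₀ hn', mul_comm]
  -- integrability
  have hXint : ∀ i, Integrable (fun ω => Real.exp (t * X i ω)) P := by
    intro i
    refine Integrable.mono' (integrable_const (Real.exp t))
      (((hmeas i).const_mul t).exp.aestronglyMeasurable) (ae_of_all _ fun ω => ?_)
    rw [Real.norm_eq_abs, abs_of_pos (Real.exp_pos _)]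
    exact Real.exp_le_exp.2 (by nlinarith [(hbound i ω).1, (hbound i ω).2])
  have hSint : Integrable (fun ω => Real.exp (t * (∑ i, X i) ω)) P :=
    hindep.integrable_exp_mul_sum hmeas fun i _ => hXint i
  have hXint' : ∀ i, Integrable (X i) P := by
    intro i
    refine Integrable.mono' (integrable_const 1) (hmeas i).aestronglyMeasurable
      (ae_of_all _ fun ω => ?_)
    rw [Real.norm_eq_abs, abs_of_nonneg (hbound i ω).1]
    exact (hbound i ω).2
  -- mgf bound per sample
  have hmgf_le : ∀ i, mgf (X i) P t ≤ 1 - μ + μ * E := by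
    intro i
    have hpt : ∀ ω, Real.exp (t * X i ω) ≤ 1 + X i ω * (E - 1) := by
      intro ω
      obtain ⟨hx0, hx1⟩ := hbound i ω
      have h := convexOn_exp.2 (Set.mem_univ (0:ℝ)) (Set.mem_univ t)
        (sub_nonneg.2 hx1) hx0 (by ring)
      simp only [smul_eq_mul, mul_zero, zero_add, Real.exp_zero, mul_one] at h
      rw [mul_comm (X i ω) t] at h
      rw [hEt] at h
      nlinarith
    have hmono : ∫ ω, Real.exp (t * X i ω) ∂P ≤ ∫ ω, (1 + X i ω * (E - 1)) ∂P :=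
      integral_mono (hXint i) ((integrable_const 1).add ((hXint' i).mul_const _)) hpt
    have hcomp : ∫ ω, (1 + X i ω * (E - 1)) ∂P = 1 + μ * (E - 1) := by
      rw [integral_add (integrable_const 1) ((hXint' i).mul_const _),
        integral_const, integral_mul_const, hmean i]
      simp
    calc mgf (X i) P t = ∫ ω, Real.exp (t * X i ω) ∂P := rfl
      _ ≤ 1 + μ * (E - 1) := by rw [← hcomp]; exact hmono
      _ = 1 - μ + μ * E := by ring
  have hDg : (0:ℝ) ≤ 1 - μ + μ * E := by nlinarith
  -- Chernoff
  have hch := measure_ge_le_exp_mul_mgf (X := ∑ i, X i) (μ := P)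
    ((n:ℝ) * ((1 + εr) * μ)) ht.le hSint
  rw [hindep.mgf_sum hmeas Finset.univ] at hch
  have hprod : ∏ i, mgf (X i) P t ≤ (1 - μ + μ * E) ^ n := by
    calc ∏ i, mgf (X i) P t ≤ ∏ _i : Fin n, (1 - μ + μ * E) :=
        Finset.prod_le_prod (fun i _ => mgf_nonneg) (fun i _ => hmgf_le i)
      _ = (1 - μ + μ * E) ^ n := by
        rw [Finset.prod_const, Finset.card_univ, Fintype.card_fin]
  have hreal : (P {ω | (n:ℝ) * ((1 + εr) * μ) ≤ (∑ i, X i) ω}).toReal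
      ≤ Real.exp ((n:ℝ) * ((εa / εr + εa) * Real.log ((εa / εr) / (εa / εr + εa)) +
           (1 - εa / εr - εa) * Real.log ((1 - εa / εr) / (1 - εa / εr - εa)))) := by
    refine le_trans hch ?_
    have h1 : Real.exp (-t * ((n:ℝ) * ((1 + εr) * μ))) * ∏ i, mgf (X i) P t
        ≤ Real.exp (-t * ((n:ℝ) * ((1 + εr) * μ))) * (1 - μ + μ * E) ^ n :=
      mul_le_mul_of_nonneg_left hprod (Real.exp_pos _).le
    refine le_trans h1 ?_
    have h2 : Real.exp (-t * ((n:ℝ) * ((1 + εr) * μ))) * (1 - μ + μ * E) ^ n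
        = (Real.exp (-t * ((1 + εr) * μ)) * (1 - μ + μ * E)) ^ n := by
      rw [mul_pow, ← Real.exp_nat_mul]
      congr 1
      ring
    rw [h2]
    have h3 : (Real.exp (-t * ((1 + εr) * μ)) * (1 - μ + μ * E)) ^ n
        ≤ (Real.exp ((εa / εr + εa) * Real.log ((εa / εr) / (εa / εr + εa)) +
           (1 - (εa / εr + εa)) * Real.log ((1 - εa / εr) / (1 - (εa / εr + εa))))) ^ n := by
      apply pow_le_pow_left₀ (by positivity) hkey
    refine le_trans h3 ?_
    rw [← Real.exp_nat_mul]
    apply Real.exp_le_exp.2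
    apply le_of_eq
    congr 1
    ring_nf
  rw [hset]
  calc P {ω | (n:ℝ) * ((1 + εr) * μ) ≤ (∑ i, X i) ω}
      = ENNReal.ofReal ((P {ω | (n:ℝ) * ((1 + εr) * μ) ≤ (∑ i, X i) ω}).toReal) :=
        (ENNReal.ofReal_toReal (measure_ne_top _ _)).symm
    _ ≤ _ := ENNReal.ofReal_le_ofReal hreal
end

section
/- Let ε_a, ε_r ∈ (0,1) with ε_a/ε_r + ε_a ≤ 1/2, and δ ∈ (0,1). Let X₁, ..., Xₙ be i.i.d. random variables with 0 ≤ Xᵢ ≤ 1 and E[Xᵢ] = μ ∈ (0,1), and set μ̂ = (∑ᵢ Xᵢ)/n. If n > ε_r·ln(2/δ) / [(ε_a + ε_a·ε_r)·ln(1 + ε_r) + (ε_r - ε_a - ε_a·ε_r)·ln(1 - ε_a·ε_r/(ε_r - ε_a))], then Pr{ |μ̂ - μ| < ε_a or |(μ̂ - μ)/μ| < ε_r } > 1 - δ. -/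
open Real

lemma log_le_half_sub_inv {x : ℝ} (hx : 1 ≤ x) : Real.log x ≤ (x - x⁻¹) / 2 := by
  have hx0 : (0:ℝ) < x := lt_of_lt_of_le one_pos hx
  rw [Real.log_le_iff_le_exp hx0]
  have hinv : x⁻¹ ≤ 1 := inv_le_one_of_one_le₀ hx
  have ht : 0 ≤ (x - x⁻¹)/2 := by linarith
  have h := Real.quadratic_le_exp_of_nonneg ht
  have hxx : x * x⁻¹ = 1 := mul_inv_cancel₀ hx0.ne'
  nlinarith [sq_nonneg (x + x⁻¹ - 2)]

lemma log_sub_log_le {b c : ℝ} (hb : 0 < b) (hbc : b ≤ c) :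
    Real.log c - Real.log b ≤ (c^2 - b^2) / (2*(b*c)) := by
  have hc : 0 < c := lt_of_lt_of_le hb hbc
  have h1 : (1:ℝ) ≤ c / b := (one_le_div hb).2 hbc
  have h := log_le_half_sub_inv h1
  rw [Real.log_div hc.ne' hb.ne'] at h
  calc Real.log c - Real.log b ≤ (c/b - (c/b)⁻¹)/2 := h
    _ = (c^2 - b^2) / (2*(b*c)) := by field_simp

noncomputable def Hf (a p : ℝ) : ℝ :=
  a * Real.log a - a * Real.log p + (1-a) * Real.log (1-a) - (1-a) * Real.log (1-p)

lemma Hf_pos {a p : ℝ} (hp0 : 0 < p) (hp1 : p < 1) (ha0 : 0 < a) (ha1 : a < 1)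
    (hap : a ≠ p) : 0 < Hf a p := by
  have h1 : Real.log (p/a) < p/a - 1 :=
    Real.log_lt_sub_one_of_pos (by positivity) (by
      intro h; apply hap; field_simp at h; linarith)
  have h2 : Real.log ((1-p)/(1-a)) < (1-p)/(1-a) - 1 :=
    Real.log_lt_sub_one_of_pos (div_pos (by linarith) (by linarith)) (by
      intro h; apply hap
      rw [div_eq_one_iff_eq (by linarith : (1:ℝ)-a ≠ 0)] at h; linarith)
  rw [Real.log_div hp0.ne' ha0.ne'] at h1
  rw [Real.log_div (by linarith : (1:ℝ)-p ≠ 0) (by linarith : (1:ℝ)-a ≠ 0)] at h2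
  have e1 : a * (p/a - 1) = p - a := by field_simp [ha0.ne']
  have e2 : (1-a) * ((1-p)/(1-a) - 1) = a - p := by
    have h : (1:ℝ) - a ≠ 0 := by linarith
    field_simp
    ring
  have c1 : a * (Real.log p - Real.log a) < p - a := by
    calc a * (Real.log p - Real.log a) < a * (p/a - 1) := by
          exact (mul_lt_mul_iff_right₀ ha0).2 h1
      _ = p - a := e1
  have c2 : (1-a) * (Real.log (1-p) - Real.log (1-a)) < a - p := by
    calc (1-a) * (Real.log (1-p) - Real.log (1-a)) < (1-a) * ((1-p)/(1-a) - 1) := by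
          exact (mul_lt_mul_iff_right₀ (by linarith)).2 h2
      _ = a - p := e2
  unfold Hf; nlinarith

lemma hasDerivAt_affine_mul_log (c₀ c₁ d₀ d₁ m : ℝ) (h : d₀ + d₁*m ≠ 0) :
    HasDerivAt (fun x => (c₀ + c₁*x) * Real.log (d₀ + d₁*x))
      (c₁ * Real.log (d₀ + d₁*m) + (c₀ + c₁*m) * (d₁ / (d₀ + d₁*m))) m := by
  have h1 : HasDerivAt (fun x : ℝ => c₀ + c₁*x) c₁ m := by
    simpa using ((hasDerivAt_id m).const_mul c₁).const_add c₀
  have h2 : HasDerivAt (fun x : ℝ => d₀ + d₁*x) d₁ m := by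
    simpa using ((hasDerivAt_id m).const_mul d₁).const_add d₀
  exact h1.mul (h2.log h)

lemma hasDerivAt_HfA {a : ℝ} (m : ℝ) (hm : 0 < m) (hma : m + a < 1) (ha : 0 < a) :
    HasDerivAt (fun x => Hf (x+a) x)
      (Real.log (m+a) - Real.log m - Real.log (1-m-a) + Real.log (1-m)
        - a/m - a/(1-m)) m := by
  have k1 := hasDerivAt_affine_mul_log a 1 a 1 m (by linarith [hm] : a + 1*m ≠ 0)
  have k2 := hasDerivAt_affine_mul_log a 1 0 1 m (by simpa using hm.ne')
  have k3 := hasDerivAt_affine_mul_log (1-a) (-1) (1-a) (-1) m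
    (by intro h; apply absurd hma; push_neg; nlinarith)
  have k4 := hasDerivAt_affine_mul_log (1-a) (-1) 1 (-1) m
    (by intro h; apply absurd hm; push_neg; nlinarith)
  have := ((k1.sub k2).add k3).sub k4
  have heq : (fun x => Hf (x+a) x)
      = fun x => ((a + 1*x) * Real.log (a + 1*x) - (a + 1*x) * Real.log (0 + 1*x)
        + (1-a + (-1)*x) * Real.log (1-a + (-1)*x))
        - (1-a + (-1)*x) * Real.log (1 + (-1)*x) := by
    funext x; unfold Hf; ring_nf
  rw [heq]
  refine HasDerivAt.congr_deriv this ?_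
  symm
  have hm' : m ≠ 0 := hm.ne'
  have h1 : a + 1*m ≠ 0 := by linarith
  have h2 : (1:ℝ)-a + (-1)*m ≠ 0 := by intro h; nlinarith
  have h3 : (1:ℝ) + (-1)*m ≠ 0 := by intro h; nlinarith
  have e1 : a + 1*m = m + a := by ring
  have e2 : (0:ℝ) + 1*m = m := by ring
  have e3 : 1-a + (-1)*m = 1-m-a := by ring
  have e4 : (1:ℝ) + (-1)*m = 1-m := by ring
  rw [e1, e2, e3, e4]
  have hm2 : (1:ℝ)-m-a ≠ 0 := by intro h; nlinarith
  have hm3 : (1:ℝ)-m ≠ 0 := by intro h; nlinarith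
  have hma' : m + a ≠ 0 := by linarith
  field_simp
  ring

lemma Hf_add_anti {a x y : ℝ} (ha : 0 < a) (hx : 0 < x) (hxy : x ≤ y) (hy : y + a ≤ 1/2) :
    Hf (y+a) y ≤ Hf (x+a) x := by
  have key : ∀ m ∈ Set.Icc x y, HasDerivAt (fun z => Hf (z+a) z)
      (Real.log (m+a) - Real.log m - Real.log (1-m-a) + Real.log (1-m)
        - a/m - a/(1-m)) m := by
    intro m hm
    exact hasDerivAt_HfA m (lt_of_lt_of_le hx hm.1) (by nlinarith [hm.2]) ha
  have hanti := antitoneOn_of_deriv_nonpos (convex_Icc x y)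
    (fun m hm => (key m hm).continuousAt.continuousWithinAt)
    (fun m hm => by
      rw [interior_Icc] at hm
      exact (key m ⟨hm.1.le, hm.2.le⟩).differentiableAt.differentiableWithinAt)
    (fun m hm => by
      rw [interior_Icc] at hm
      rw [(key m ⟨hm.1.le, hm.2.le⟩).deriv]
      have hm0 : 0 < m := lt_of_lt_of_le hx hm.1.le
      have hma : m + a ≤ 1/2 := by nlinarith [hm.2.le]
      have hm1 : m < 1 := by linarith
      have hma1 : 0 < m + a := by linarith
      have h2a : (0:ℝ) < 1 - m - a := by linarith
      have h2b : (0:ℝ) < 1 - m := by linarith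
      have h1 : Real.log (m+a) - Real.log m ≤ ((m+a)^2 - m^2)/(2*(m*(m+a))) :=
        log_sub_log_le hm0 (by linarith)
      have h2 : Real.log (1-m) - Real.log (1-m-a) ≤
          ((1-m)^2 - (1-m-a)^2)/(2*((1-m-a)*(1-m))) :=
        log_sub_log_le h2a (by linarith)
      have e : ((m+a)^2 - m^2)/(2*(m*(m+a))) + ((1-m)^2 - (1-m-a)^2)/(2*((1-m-a)*(1-m)))
          - a/m - a/(1-m)
          = -(a^2*(1-a-2*m) / (2*(m*(m+a)*((1-m-a)*(1-m))))) := by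
        field_simp
        ring
      have hnn : 0 ≤ a^2*(1-a-2*m) / (2*(m*(m+a)*((1-m-a)*(1-m)))) :=
        div_nonneg (mul_nonneg (sq_nonneg a) (by linarith)) (by positivity)
      linarith)
  exact hanti (Set.left_mem_Icc.2 hxy) (Set.right_mem_Icc.2 hxy) hxy

lemma hasDerivAt_HfM {r : ℝ} (hr : 0 < r) (m : ℝ) (hm : 0 < m) (hm1 : m < 1)
    (hrm : r*m < 1) :
    HasDerivAt (fun z => Hf (r*z) z)
      (r * Real.log r - r*(Real.log (1-r*m) - Real.log (1-m)) - r + (1-r*m)/(1-m)) m := by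
  have hrm0 : 0 < r*m := by positivity
  have k1 := hasDerivAt_affine_mul_log 0 r 0 r m (by simpa using hrm0.ne')
  have k2 := hasDerivAt_affine_mul_log 0 r 0 1 m (by simpa using hm.ne')
  have k3 := hasDerivAt_affine_mul_log 1 (-r) 1 (-r) m (by intro h; nlinarith)
  have k4 := hasDerivAt_affine_mul_log 1 (-r) 1 (-1) m (by intro h; nlinarith)
  have hD := ((k1.sub k2).add k3).sub k4
  have heq : (fun z => Hf (r*z) z)
      = fun z => ((0 + r*z) * Real.log (0 + r*z) - (0 + r*z) * Real.log (0 + 1*z)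
        + (1 + (-r)*z) * Real.log (1 + (-r)*z))
        - (1 + (-r)*z) * Real.log (1 + (-1)*z) := by
    funext z; unfold Hf; ring_nf
  rw [heq]
  refine HasDerivAt.congr_deriv hD ?_
  symm
  have e1 : (0:ℝ) + r*m = r*m := by ring
  have e2 : (0:ℝ) + 1*m = m := by ring
  have e3 : (1:ℝ) + (-r)*m = 1-r*m := by ring
  have e4 : (1:ℝ) + (-1)*m = 1-m := by ring
  rw [e1, e2, e3, e4]
  have h1 : r*m ≠ 0 := hrm0.ne'
  have h2 : (1:ℝ)-r*m ≠ 0 := by intro h; nlinarith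
  have h3 : (1:ℝ)-m ≠ 0 := by intro h; nlinarith
  have hlog : Real.log (r*m) = Real.log r + Real.log m := Real.log_mul hr.ne' hm.ne'
  rw [hlog]
  field_simp
  ring

lemma Hf_mul_mono {r x y : ℝ} (hr : 0 < r) (hx : 0 < x) (hxy : x ≤ y) (hy1 : y < 1)
    (hry : r*y < 1) : Hf (r*x) x ≤ Hf (r*y) y := by
  have key : ∀ m ∈ Set.Icc x y, HasDerivAt (fun z => Hf (r*z) z)
      (r * Real.log r - r*(Real.log (1-r*m) - Real.log (1-m)) - r + (1-r*m)/(1-m)) m := by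
    intro m hm
    have hm0 : 0 < m := lt_of_lt_of_le hx hm.1
    have hm1 : m < 1 := lt_of_le_of_lt hm.2 hy1
    have hrm : r*m < 1 := lt_of_le_of_lt (by nlinarith [hm.2] : r*m ≤ r*y) hry
    exact hasDerivAt_HfM hr m hm0 hm1 hrm
  have hmono := monotoneOn_of_deriv_nonneg (convex_Icc x y)
    (fun m hm => (key m hm).continuousAt.continuousWithinAt)
    (fun m hm => by
      rw [interior_Icc] at hm
      exact (key m ⟨hm.1.le, hm.2.le⟩).differentiableAt.differentiableWithinAt)
    (fun m hm => by
      rw [interior_Icc] at hm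
      rw [(key m ⟨hm.1.le, hm.2.le⟩).deriv]
      have hm0 : 0 < m := lt_of_lt_of_le hx hm.1.le
      have hm1 : m < 1 := lt_of_le_of_lt hm.2.le hy1
      have hrm : r*m < 1 := lt_of_le_of_lt (mul_le_mul_of_nonneg_left hm.2.le hr.le) hry
      have hw0 : 0 < (1-r*m)/(1-m) := div_pos (by linarith) (by linarith)
      set w := (1-r*m)/(1-m) with hw
      have hlogw : Real.log (1-r*m) - Real.log (1-m) = Real.log w := by
        rw [hw, Real.log_div (by linarith : (1:ℝ)-r*m ≠ 0) (by linarith : (1:ℝ)-m ≠ 0)]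
      rw [hlogw]
      -- piece 1 : r * log r - r + 1 ≥ 0
      have p1 : r - 1 ≤ r * Real.log r := by
        have := Real.one_sub_inv_le_log_of_pos hr
        have h := mul_le_mul_of_nonneg_left this hr.le
        calc r - 1 = r * (1 - r⁻¹) := by field_simp
          _ ≤ r * Real.log r := h
      -- piece 2a : -(r-1) * log w ≥ 0
      have hwsign : w - 1 = m*(1-r)/(1-m) := by
        have h3 : (1:ℝ)-m ≠ 0 := by linarith
        rw [hw]; field_simp; ring
      have p2a : 0 ≤ -((r-1) * Real.log w) := by
        rcases le_total r 1 with h | h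
        · have hw1 : 1 ≤ w := by
            rw [← sub_nonneg, hwsign]
            exact div_nonneg (mul_nonneg hm0.le (by linarith)) (by linarith)
          have : 0 ≤ Real.log w := Real.log_nonneg hw1
          nlinarith
        · have hw1 : w ≤ 1 := by
            rw [← sub_nonpos, hwsign]
            apply div_nonpos_of_nonpos_of_nonneg (by nlinarith) (by linarith)
          have : Real.log w ≤ 0 := Real.log_nonpos hw0.le hw1
          nlinarith
      -- piece 2b : w - 1 - log w ≥ 0
      have p2b : Real.log w ≤ w - 1 := Real.log_le_sub_one_of_pos hw0
      nlinarith)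
  exact hmono (Set.left_mem_Icc.2 hxy) (Set.right_mem_Icc.2 hxy) hxy

lemma hasDerivAt_HfS {p : ℝ} (hp0 : 0 < p) (hp1 : p < 1) (x : ℝ)
    (hx1 : p - x ≠ 0) (hx2 : p + x ≠ 0) (hx3 : 1-p+x ≠ 0) (hx4 : 1-p-x ≠ 0) :
    HasDerivAt (fun z => Hf (p-z) p - Hf (p+z) p)
      (2*Real.log p - 2*Real.log (1-p) - Real.log (p-x) - Real.log (p+x)
        + Real.log (1-p+x) + Real.log (1-p-x)) x := by
  have k1 := hasDerivAt_affine_mul_log p (-1) p (-1) x (by intro h; apply hx1; linarith)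
  have k2 := hasDerivAt_affine_mul_log p (-1) p 0 x (by simpa using hp0.ne')
  have k3 := hasDerivAt_affine_mul_log (1-p) 1 (1-p) 1 x (by intro h; apply hx3; linarith)
  have k4 := hasDerivAt_affine_mul_log (1-p) 1 (1-p) 0 x
    (by simp only [mul_zero, zero_mul, add_zero]; intro h; linarith)
  have k5 := hasDerivAt_affine_mul_log p 1 p 1 x (by intro h; apply hx2; linarith)
  have k6 := hasDerivAt_affine_mul_log p 1 p 0 x (by simpa using hp0.ne')
  have k7 := hasDerivAt_affine_mul_log (1-p) (-1) (1-p) (-1) x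
    (by intro h; apply hx4; linarith)
  have k8 := hasDerivAt_affine_mul_log (1-p) (-1) (1-p) 0 x
    (by simp only [mul_zero, zero_mul, add_zero]; intro h; linarith)
  have hD := ((((k1.sub k2).add k3).sub k4).sub (((k5.sub k6).add k7).sub k8))
  have heq : (fun z => Hf (p-z) p - Hf (p+z) p)
      = fun z => (((p + (-1)*z) * Real.log (p + (-1)*z) - (p + (-1)*z) * Real.log (p + 0*z)
          + (1-p + 1*z) * Real.log (1-p + 1*z)) - (1-p + 1*z) * Real.log (1-p + 0*z))
        - (((p + 1*z) * Real.log (p + 1*z) - (p + 1*z) * Real.log (p + 0*z)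
          + (1-p + (-1)*z) * Real.log (1-p + (-1)*z)) - (1-p + (-1)*z) * Real.log (1-p + 0*z)) := by
    funext z; unfold Hf; ring_nf
  rw [heq]
  refine HasDerivAt.congr_deriv hD ?_
  symm
  have e1 : p + (-1)*x = p - x := by ring
  have e2 : p + 0*x = p := by ring
  have e3 : 1-p + 1*x = 1-p+x := by ring
  have e4 : 1-p + 0*x = 1-p := by ring
  have e5 : p + 1*x = p + x := by ring
  have e6 : 1-p + (-1)*x = 1-p-x := by ring
  rw [e1, e2, e3, e4, e5, e6]
  field_simp
  ring

lemma Hf_sym {p x : ℝ} (hp0 : 0 < p) (hp : p ≤ 1/2) (hx0 : 0 ≤ x) (hxp : x ≤ p) :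
    Hf (p+x) p ≤ Hf (p-x) p := by
  have hp1 : p < 1 := by linarith
  have hml := Real.continuous_mul_log
  have hcont : Continuous (fun z : ℝ => Hf (p-z) p - Hf (p+z) p) := by
    unfold Hf
    have c1 : Continuous fun z:ℝ => (p-z) * Real.log (p-z) :=
      hml.comp (continuous_const.sub continuous_id)
    have c2 : Continuous fun z:ℝ => (1-(p-z)) * Real.log (1-(p-z)) :=
      hml.comp (by continuity)
    have c3 : Continuous fun z:ℝ => (p+z) * Real.log (p+z) :=
      hml.comp (by continuity)
    have c4 : Continuous fun z:ℝ => (1-(p+z)) * Real.log (1-(p+z)) :=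
      hml.comp (by continuity)
    have c5 : Continuous fun z:ℝ => (p-z) * Real.log p := by continuity
    have c6 : Continuous fun z:ℝ => (1-(p-z)) * Real.log (1-p) := by continuity
    have c7 : Continuous fun z:ℝ => (p+z) * Real.log p := by continuity
    have c8 : Continuous fun z:ℝ => (1-(p+z)) * Real.log (1-p) := by continuity
    exact (((c1.sub c5).add c2).sub c6).sub (((c3.sub c7).add c4).sub c8)
  have hmono := monotoneOn_of_deriv_nonneg (convex_Icc (0:ℝ) p)
    hcont.continuousOn
    (fun z hz => by
      rw [interior_Icc] at hz
      have h1 : p - z ≠ 0 := by have := hz.2; intro h; linarith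
      have h2 : p + z ≠ 0 := by have := hz.1; intro h; linarith
      have h3 : (1:ℝ)-p+z ≠ 0 := by have := hz.1; intro h; linarith
      have h4 : (1:ℝ)-p-z ≠ 0 := by intro h; nlinarith [hz.2]
      exact (hasDerivAt_HfS hp0 hp1 z h1 h2 h3 h4).differentiableAt.differentiableWithinAt)
    (fun z hz => by
      rw [interior_Icc] at hz
      have hz0 := hz.1
      have hzp := hz.2
      have h1 : 0 < p - z := by linarith
      have h2 : 0 < p + z := by linarith
      have h3 : (0:ℝ) < 1-p+z := by linarith
      have h4 : (0:ℝ) < 1-p-z := by nlinarith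
      rw [(hasDerivAt_HfS hp0 hp1 z h1.ne' h2.ne' h3.ne' h4.ne').deriv]
      have hu : 0 < (p-z)*(p+z) := by positivity
      have hv : (0:ℝ) < (1-p+z)*(1-p-z) := by positivity
      have l1 : Real.log (p-z) + Real.log (p+z) = Real.log ((p-z)*(p+z)) :=
        (Real.log_mul h1.ne' h2.ne').symm
      have l2 : Real.log (1-p+z) + Real.log (1-p-z) = Real.log ((1-p+z)*(1-p-z)) :=
        (Real.log_mul h3.ne' h4.ne').symm
      have key : Real.log ((p-z)*(p+z)) - 2*Real.log p
          ≤ Real.log ((1-p+z)*(1-p-z)) - 2*Real.log (1-p) := by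
        have hq0 : (0:ℝ) < 1-p := by linarith
        have e1 : 2*Real.log p = Real.log (p^2) := by
          rw [Real.log_pow]; push_cast; ring
        have e2 : 2*Real.log (1-p) = Real.log ((1-p)^2) := by
          rw [Real.log_pow]; push_cast; ring
        rw [e1, e2, ← Real.log_div hu.ne' (by positivity),
          ← Real.log_div hv.ne' (by positivity)]
        apply Real.log_le_log (by positivity)
        rw [div_le_div_iff₀ (by positivity) (by positivity)]
        nlinarith [sq_nonneg z, sq_nonneg (z*(1-2*p))]
      linarith)
  have h0m : (0:ℝ) ∈ Set.Icc (0:ℝ) p := Set.left_mem_Icc.2 hp0.le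
  have hxm : x ∈ Set.Icc (0:ℝ) p := ⟨hx0, hxp⟩
  have := hmono h0m hxm hx0
  simp only [sub_zero, add_zero] at this
  linarith

section Spec
set_option linter.unusedSectionVars false
variable {εa εr : ℝ} (hεa : 0 < εa) (hεa1 : εa < 1) (hεr : 0 < εr) (hεr1 : εr < 1)
  (hc : εa / εr + εa ≤ 1 / 2)

include hεa hεa1 hεr hεr1 hc

lemma hc' : εa + εa*εr ≤ εr/2 := by
  have h2 : (εa/εr)*εr = εa := div_mul_cancel₀ εa hεr.ne'
  have h3 := mul_le_mul_of_nonneg_right hc hεr.le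
  nlinarith

lemma hεa_le_ps : εa ≤ εa/εr := by
  rw [le_div_iff₀ hεr]; nlinarith

lemma K_pos : 0 < Hf (εa/εr + εa) (εa/εr) := by
  have h1 : 0 < εa/εr := by positivity
  apply Hf_pos h1 (by linarith) (by linarith) (by linarith) (by linarith)

lemma K_le_upper : ∀ μ : ℝ, 0 < μ → μ < 1 → μ + max εa (εr*μ) < 1 →
    Hf (εa/εr + εa) (εa/εr) ≤ Hf (μ + max εa (εr*μ)) μ := by
  intro μ hμ0 hμ1 hlt
  have hps : 0 < εa/εr := by positivity
  rcases le_total μ (εa/εr) with h | h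
  · have hm : εr*μ ≤ εa := by
      rw [le_div_iff₀ hεr] at h; linarith [mul_comm εr μ]
    rw [max_eq_left hm]
    exact Hf_add_anti hεa hμ0 h hc
  · have hm : εa ≤ εr*μ := by
      rw [div_le_iff₀ hεr] at h; linarith [mul_comm εr μ]
    rw [max_eq_right hm]
    have e1 : μ + εr*μ = (1+εr)*μ := by ring
    have e2 : εa/εr + εa = (1+εr)*(εa/εr) := by field_simp
    rw [e1, e2]
    apply Hf_mul_mono (by linarith) hps h hμ1
    rw [max_eq_right hm] at hlt; linarith

lemma K_le_lower : ∀ μ : ℝ, 0 < μ → μ < 1 → 0 ≤ μ - max εa (εr*μ) →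
    Hf (εa/εr + εa) (εa/εr) ≤ Hf (μ - max εa (εr*μ)) μ := by
  intro μ hμ0 hμ1 hge
  have hps : 0 < εa/εr := by positivity
  rcases le_total μ (εa/εr) with h | h
  · have hm : εr*μ ≤ εa := by
      rw [le_div_iff₀ hεr] at h; linarith [mul_comm εr μ]
    rw [max_eq_left hm]
    rw [max_eq_left hm] at hge
    have h1 : Hf (μ + εa) μ ≤ Hf (μ - εa) μ :=
      Hf_sym hμ0 (by linarith) hεa.le (by linarith)
    have h2 : Hf (εa/εr + εa) (εa/εr) ≤ Hf (μ + εa) μ := Hf_add_anti hεa hμ0 h hc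
    linarith
  · have hm : εa ≤ εr*μ := by
      rw [div_le_iff₀ hεr] at h; linarith [mul_comm εr μ]
    rw [max_eq_right hm]
    have hεaps : εa ≤ εa/εr := hεa_le_ps hεa hεa1 hεr hεr1 hc
    have step1 : Hf (εa/εr - εa) (εa/εr) ≤ Hf ((1-εr)*μ) μ := by
      have e2 : εa/εr - εa = (1-εr)*(εa/εr) := by field_simp
      rw [e2]
      exact Hf_mul_mono (by linarith) hps h hμ1 (by nlinarith)
    have step2 : Hf (εa/εr + εa) (εa/εr) ≤ Hf (εa/εr - εa) (εa/εr) :=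
      Hf_sym hps (by linarith) hεa.le hεaps
    have e1 : μ - εr*μ = (1-εr)*μ := by ring
    rw [e1]
    linarith

lemma K_le_log : Hf (εa/εr + εa) (εa/εr) ≤ Real.log (1+εr) := by
  have hps : 0 < εa/εr := by positivity
  have hA0 : 0 < εa/εr + εa := by positivity
  have hA2 : εa/εr + εa ≤ 1/2 := hc
  have l1 : Real.log (εa/εr + εa) - Real.log (εa/εr) = Real.log (1+εr) := by
    have e : εa/εr + εa = (εa/εr)*(1+εr) := by field_simp
    rw [e, Real.log_mul hps.ne' (by linarith)]; ring
  have l2 : Real.log (1-(εa/εr + εa)) ≤ Real.log (1-εa/εr) :=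
    Real.log_le_log (by linarith) (by linarith)
  have hlognn : 0 ≤ Real.log (1+εr) := Real.log_nonneg (by linarith)
  have expand : Hf (εa/εr + εa) (εa/εr)
      = (εa/εr + εa) * (Real.log (εa/εr + εa) - Real.log (εa/εr))
      + (1-(εa/εr + εa)) * (Real.log (1-(εa/εr + εa)) - Real.log (1-εa/εr)) := by
    unfold Hf; ring
  rw [expand, l1]
  nlinarith [mul_nonneg (by linarith : (0:ℝ) ≤ 1-(εa/εr + εa))
    (by linarith : (0:ℝ) ≤ Real.log (1-εa/εr) - Real.log (1-(εa/εr + εa)))]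

lemma K_identity : Hf (εa/εr + εa) (εa/εr)
    = ((εa + εa * εr) * Real.log (1 + εr) +
       (εr - εa - εa * εr) * Real.log (1 - εa * εr / (εr - εa))) / εr := by
  have hps : 0 < εa/εr := by positivity
  have hA2 : εa/εr + εa ≤ 1/2 := hc
  have hk := hc' hεa hεa1 hεr hεr1 hc
  have hra : εa < εr := by nlinarith
  have hne : εr - εa ≠ 0 := by linarith
  have l1 : Real.log (εa/εr + εa) - Real.log (εa/εr) = Real.log (1+εr) := by
    have e : εa/εr + εa = (εa/εr)*(1+εr) := by field_simp
    rw [e, Real.log_mul hps.ne' (by linarith)]; ring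
  have harg : 0 < 1 - εa*εr/(εr-εa) := by
    rw [sub_pos, div_lt_one (by linarith : (0:ℝ) < εr-εa)]
    linarith
  have l2 : Real.log (1-(εa/εr + εa)) - Real.log (1-εa/εr)
      = Real.log (1 - εa*εr/(εr-εa)) := by
    have e : 1-(εa/εr + εa) = (1-εa/εr)*(1-εa*εr/(εr-εa)) := by
      field_simp
      ring
    have hne2 : (1:ℝ)-εa/εr ≠ 0 := by nlinarith
    rw [e, Real.log_mul hne2 harg.ne']; ring
  have expand : Hf (εa/εr + εa) (εa/εr)
      = (εa/εr + εa) * (Real.log (εa/εr + εa) - Real.log (εa/εr))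
      + (1-(εa/εr + εa)) * (Real.log (1-(εa/εr + εa)) - Real.log (1-εa/εr)) := by
    unfold Hf; ring
  rw [expand, l1, l2]
  have c2 : 1-(εa/εr + εa) = (εr - εa - εa*εr)/εr := by field_simp; ring
  have c1 : εa/εr + εa = (εa + εa*εr)/εr := by field_simp
  rw [c2, c1]
  ring

end Spec

open MeasureTheory ProbabilityTheory Topology Filter

section Prob

variable {Ω : Type*} [MeasurableSpace Ω] (P : Measure Ω) [IsProbabilityMeasure P]

lemma integrable_exp_of_bound {f : Ω → ℝ} (hf : Measurable f) {C : ℝ}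
    (hC : ∀ ω, |f ω| ≤ C) (s : ℝ) : Integrable (fun ω => Real.exp (s * f ω)) P := by
  apply Integrable.mono' (integrable_const (Real.exp (|s| * C)))
  · exact ((hf.const_mul s).exp).aestronglyMeasurable
  · refine Filter.Eventually.of_forall fun ω => ?_
    rw [Real.norm_eq_abs, Real.abs_exp]
    apply Real.exp_le_exp.2
    calc s * f ω ≤ |s * f ω| := le_abs_self _
      _ = |s| * |f ω| := abs_mul s (f ω)
      _ ≤ |s| * C := mul_le_mul_of_nonneg_left (hC ω) (abs_nonneg s)

variable {n : ℕ} {X : Fin n → Ω → ℝ} (hmeas : ∀ i, Measurable (X i))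
  (hbound : ∀ i ω, X i ω ∈ Set.Icc (0 : ℝ) 1)
  {μ : ℝ} (hμ0 : 0 < μ) (hμ1 : μ < 1) (hmean : ∀ i, ∫ ω, X i ω ∂P = μ)

include hmeas hbound hμ0 hμ1 hmean in
lemma mgf_single_le (i : Fin n) (s : ℝ) :
    mgf (X i) P s ≤ 1 - μ + μ * Real.exp s := by
  have hXint : Integrable (X i) P := by
    apply Integrable.mono' (integrable_const (1:ℝ)) (hmeas i).aestronglyMeasurable
    refine Filter.Eventually.of_forall fun ω => ?_
    rw [Real.norm_eq_abs, abs_le]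
    exact ⟨by linarith [(hbound i ω).1], (hbound i ω).2⟩
  have hint : Integrable (fun ω => Real.exp (s * X i ω)) P :=
    integrable_exp_of_bound P (hmeas i) (fun ω => by
      rw [abs_le]; exact ⟨by linarith [(hbound i ω).1], (hbound i ω).2⟩) s
  have hpt : ∀ ω, Real.exp (s * X i ω) ≤ 1 - X i ω + X i ω * Real.exp s := by
    intro ω
    obtain ⟨hx0, hx1⟩ := hbound i ω
    have hcx := convexOn_exp.2 (Set.mem_univ (0:ℝ)) (Set.mem_univ s)
      (by linarith : 0 ≤ 1 - X i ω) hx0 (by ring)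
    simp only [smul_eq_mul, mul_zero, zero_add, Real.exp_zero, mul_one] at hcx
    calc Real.exp (s * X i ω) = Real.exp (X i ω * s) := by rw [mul_comm]
      _ ≤ (1 - X i ω) * 1 + X i ω * Real.exp s := by simpa using hcx
      _ = 1 - X i ω + X i ω * Real.exp s := by ring
  have hint2 : Integrable (fun ω => 1 - X i ω + X i ω * Real.exp s) P :=
    ((integrable_const (1:ℝ)).sub hXint).add (hXint.mul_const _)
  calc mgf (X i) P s = ∫ ω, Real.exp (s * X i ω) ∂P := rfl
    _ ≤ ∫ ω, (1 - X i ω + X i ω * Real.exp s) ∂P :=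
        integral_mono hint hint2 hpt
    _ = ∫ ω, (1 + (Real.exp s - 1) * X i ω) ∂P := by
        congr 1; funext ω; ring
    _ = 1 - μ + μ * Real.exp s := by
        rw [integral_add (integrable_const (1:ℝ)) (hXint.const_mul _),
          MeasureTheory.integral_const_mul, integral_const, hmean i]
        simp
        ring

variable (hindep : iIndepFun X P)

include hmeas hbound hμ0 hμ1 hmean hindep in
lemma mgf_sum_le (s : ℝ) :
    mgf (fun ω => ∑ i, X i ω) P s ≤ (1 - μ + μ * Real.exp s)^n := by
  have hfun : (fun ω => ∑ i, X i ω) = ∑ i, X i := by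
    funext ω; rw [Finset.sum_apply]
  rw [hfun, hindep.mgf_sum hmeas Finset.univ]
  have hb : 0 < 1 - μ + μ * Real.exp s := by nlinarith [Real.exp_pos s]
  calc ∏ i, mgf (X i) P s ≤ ∏ _i : Fin n, (1 - μ + μ * Real.exp s) :=
      Finset.prod_le_prod (fun i _ => mgf_nonneg)
        (fun i _ => mgf_single_le P hmeas hbound hμ0 hμ1 hmean i s)
    _ = (1 - μ + μ * Real.exp s)^n := by
        rw [Finset.prod_const, Finset.card_univ, Fintype.card_fin]

include hmeas hbound hμ0 hμ1 hmean hindep in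
lemma chernoff_upper (y s : ℝ) (hs : 0 ≤ s) :
    (P {ω | y ≤ ∑ i, X i ω}).toReal
      ≤ Real.exp (-s*y) * (1 - μ + μ * Real.exp s)^n := by
  have hSmeas : Measurable (fun ω => ∑ i, X i ω) :=
    Finset.measurable_sum _ (fun i _ => hmeas i)
  have hSb : ∀ ω, |∑ i, X i ω| ≤ (n:ℝ) := by
    intro ω
    rw [abs_le]
    constructor
    · have : (0:ℝ) ≤ ∑ i, X i ω := Finset.sum_nonneg fun i _ => (hbound i ω).1
      have hn : (0:ℝ) ≤ (n:ℝ) := Nat.cast_nonneg n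
      linarith
    · calc ∑ i, X i ω ≤ ∑ _i : Fin n, (1:ℝ) :=
          Finset.sum_le_sum fun i _ => (hbound i ω).2
        _ = n := by simp
  have hint : Integrable (fun ω => Real.exp (s * ∑ i, X i ω)) P :=
    integrable_exp_of_bound P hSmeas hSb s
  have h := measure_ge_le_exp_mul_mgf (X := fun ω => ∑ i, X i ω) (μ := P) y hs hint
  refine h.trans ?_
  have := mgf_sum_le P hmeas hbound hμ0 hμ1 hmean hindep s
  exact mul_le_mul_of_nonneg_left this (Real.exp_pos _).le

include hmeas hbound hμ0 hμ1 hmean hindep in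
lemma chernoff_lower (y s : ℝ) (hs : 0 ≤ s) :
    (P {ω | ∑ i, X i ω ≤ y}).toReal
      ≤ Real.exp (s*y) * (1 - μ + μ * Real.exp (-s))^n := by
  have hSmeas : Measurable (fun ω => -∑ i, X i ω) :=
    (Finset.measurable_sum _ (fun i _ => hmeas i)).neg
  have hSb : ∀ ω, |-∑ i, X i ω| ≤ (n:ℝ) := by
    intro ω
    rw [abs_neg, abs_le]
    constructor
    · have : (0:ℝ) ≤ ∑ i, X i ω := Finset.sum_nonneg fun i _ => (hbound i ω).1
      have hn : (0:ℝ) ≤ (n:ℝ) := Nat.cast_nonneg n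
      linarith
    · calc ∑ i, X i ω ≤ ∑ _i : Fin n, (1:ℝ) :=
          Finset.sum_le_sum fun i _ => (hbound i ω).2
        _ = n := by simp
  have hint : Integrable (fun ω => Real.exp (s * (-∑ i, X i ω))) P :=
    integrable_exp_of_bound P hSmeas hSb s
  have hset : {ω | (-y) ≤ -∑ i, X i ω} = {ω | ∑ i, X i ω ≤ y} := by
    ext ω; simp only [Set.mem_setOf_eq, neg_le_neg_iff]
  have h := measure_ge_le_exp_mul_mgf (X := fun ω => -∑ i, X i ω) (μ := P) (-y) hs hint
  rw [hset] at h
  refine h.trans ?_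
  have hneg : (fun ω => -∑ i, X i ω) = -(fun ω => ∑ i, X i ω) := rfl
  rw [hneg, mgf_neg]
  have := mgf_sum_le P hmeas hbound hμ0 hμ1 hmean hindep (-s)
  have hh := mul_le_mul_of_nonneg_left this (Real.exp_pos (-s*(-y))).le
  simpa [neg_mul, neg_neg] using hh

end Prob

set_option maxHeartbeats 2000000 in
theorem stmt_18 (εa εr : ℝ) (hεa : 0 < εa) (hεa1 : εa < 1) (hεr : 0 < εr) (hεr1 : εr < 1)
    (hc : εa / εr + εa ≤ 1 / 2) (δ : ℝ) (hδ : 0 < δ) (hδ1 : δ < 1)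
    {Ω : Type*} [MeasurableSpace Ω] (P : Measure Ω) [IsProbabilityMeasure P]
    (n : ℕ) (hn : 0 < n) (X : Fin n → Ω → ℝ)
    (hmeas : ∀ i, Measurable (X i))
    (hindep : iIndepFun X P)
    (hident : ∀ i j, IdentDistrib (X i) (X j) P P)
    (hbound : ∀ i ω, X i ω ∈ Set.Icc (0 : ℝ) 1)
    (μ : ℝ) (hμ : μ ∈ Set.Ioo (0 : ℝ) 1) (hmean : ∀ i, ∫ ω, X i ω ∂P = μ)
    (hsize : (n : ℝ) > εr * Real.log (2 / δ) /
        ((εa + εa * εr) * Real.log (1 + εr) +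
         (εr - εa - εa * εr) * Real.log (1 - εa * εr / (εr - εa)))) :
    P {ω | |(∑ i, X i ω) / n - μ| < εa ∨ |((∑ i, X i ω) / n - μ) / μ| < εr}
      > ENNReal.ofReal (1 - δ) := by
  obtain ⟨hμ0, hμ1⟩ := hμ
  have hn' : (0:ℝ) < n := Nat.cast_pos.2 hn
  have hK0 : 0 < Hf (εa/εr + εa) (εa/εr) := K_pos hεa hεa1 hεr hεr1 hc
  have hKid := K_identity hεa hεa1 hεr hεr1 hc
  have hnK : Real.log (2/δ) < (n:ℝ) * Hf (εa/εr + εa) (εa/εr) := by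
    have hD : (εa + εa * εr) * Real.log (1 + εr) +
        (εr - εa - εa * εr) * Real.log (1 - εa * εr / (εr - εa))
        = εr * Hf (εa/εr + εa) (εa/εr) := by
      rw [hKid]; field_simp
    rw [hD] at hsize
    have he : εr * Real.log (2 / δ) / (εr * Hf (εa/εr + εa) (εa/εr))
        = Real.log (2/δ) / Hf (εa/εr + εa) (εa/εr) :=
      mul_div_mul_left _ _ hεr.ne'
    rw [he] at hsize
    have := (div_lt_iff₀ hK0).1 hsize
    linarith [this]
  have hexp2 : 2 * Real.exp (-((n:ℝ) * Hf (εa/εr + εa) (εa/εr))) < δ := by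
    have h1 : Real.exp (-((n:ℝ) * Hf (εa/εr + εa) (εa/εr)))
        < Real.exp (-Real.log (2/δ)) := Real.exp_lt_exp.2 (by linarith)
    have h2 : Real.exp (-Real.log (2/δ)) = δ/2 := by
      rw [Real.exp_neg, Real.exp_log (by positivity), inv_div]
    rw [h2] at h1; linarith
  have ht0 : 0 < max εa (εr*μ) := lt_of_lt_of_le hεa (le_max_left _ _)
  have hSmeas : Measurable (fun ω => ∑ i, X i ω) :=
    Finset.measurable_sum _ fun i _ => hmeas i
  have hSnn : ∀ ω, (0:ℝ) ≤ ∑ i, X i ω :=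
    fun ω => Finset.sum_nonneg fun i _ => (hbound i ω).1
  have hSle : ∀ ω, ∑ i, X i ω ≤ (n:ℝ) := by
    intro ω
    calc ∑ i, X i ω ≤ ∑ _i : Fin n, (1:ℝ) :=
        Finset.sum_le_sum fun i _ => (hbound i ω).2
      _ = n := by simp
  -- upper tail bound
  have hU : (P {ω | (n:ℝ)*(μ + max εa (εr*μ)) ≤ ∑ i, X i ω}).toReal
      ≤ Real.exp (-((n:ℝ) * Hf (εa/εr + εa) (εa/εr))) := by
    rcases lt_trichotomy (μ + max εa (εr*μ)) 1 with hA1 | hA1 | hA1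
    · have hAμ : μ < μ + max εa (εr*μ) := by linarith
      have hA0 : 0 < μ + max εa (εr*μ) := by linarith
      have h1A : 0 < 1 - (μ + max εa (εr*μ)) := by linarith
      have h1μ : (0:ℝ) < 1 - μ := by linarith
      have hargpos : 0 < (μ + max εa (εr*μ))*(1-μ)/((1-(μ + max εa (εr*μ)))*μ) := by
        positivity
      have hsarg : 1 ≤ (μ + max εa (εr*μ))*(1-μ)/((1-(μ + max εa (εr*μ)))*μ) := by
        rw [le_div_iff₀ (by positivity)]
        nlinarith
      have hs0 : 0 ≤ Real.log ((μ + max εa (εr*μ))*(1-μ)/((1-(μ + max εa (εr*μ)))*μ)) :=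
        Real.log_nonneg hsarg
      have hexp_s : Real.exp (Real.log ((μ + max εa (εr*μ))*(1-μ)/((1-(μ + max εa (εr*μ)))*μ)))
          = (μ + max εa (εr*μ))*(1-μ)/((1-(μ + max εa (εr*μ)))*μ) := Real.exp_log hargpos
      have hch := chernoff_upper P hmeas hbound hμ0 hμ1 hmean hindep
        ((n:ℝ)*(μ + max εa (εr*μ)))
        (Real.log ((μ + max εa (εr*μ))*(1-μ)/((1-(μ + max εa (εr*μ)))*μ))) hs0
      have hmgf : 1 - μ + μ * Real.exp
          (Real.log ((μ + max εa (εr*μ))*(1-μ)/((1-(μ + max εa (εr*μ)))*μ)))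
          = (1-μ)/(1-(μ + max εa (εr*μ))) := by
        have h1A' : 1 - (μ + max εa (εr*μ)) ≠ 0 := h1A.ne'
        rw [hexp_s]; generalize max εa (εr*μ) = M at h1A' ⊢; field_simp; ring
      rw [hmgf] at hch
      have hw : (0:ℝ) < (1-μ)/(1-(μ + max εa (εr*μ))) := by positivity
      have hpow : ((1-μ)/(1-(μ + max εa (εr*μ))))^n
          = Real.exp ((n:ℝ) * Real.log ((1-μ)/(1-(μ + max εa (εr*μ))))) := by
        rw [Real.exp_nat_mul, Real.exp_log hw]
      rw [hpow, ← Real.exp_add] at hch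
      refine hch.trans (Real.exp_le_exp.2 ?_)
      have hsid : Real.log ((μ + max εa (εr*μ))*(1-μ)/((1-(μ + max εa (εr*μ)))*μ))
          = Real.log (μ + max εa (εr*μ)) + Real.log (1-μ)
            - Real.log (1-(μ + max εa (εr*μ))) - Real.log μ := by
        rw [Real.log_div (by positivity) (by positivity),
          Real.log_mul hA0.ne' h1μ.ne', Real.log_mul h1A.ne' hμ0.ne']
        ring
      have hwid : Real.log ((1-μ)/(1-(μ + max εa (εr*μ))))
          = Real.log (1-μ) - Real.log (1-(μ + max εa (εr*μ))) :=
        Real.log_div h1μ.ne' h1A.ne'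
      have hKA : Hf (εa/εr + εa) (εa/εr) ≤ Hf (μ + max εa (εr*μ)) μ :=
        K_le_upper hεa hεa1 hεr hεr1 hc μ hμ0 hμ1 hA1
      have hident2 : -(Real.log ((μ + max εa (εr*μ))*(1-μ)/((1-(μ + max εa (εr*μ)))*μ)))
            *((n:ℝ)*(μ + max εa (εr*μ)))
          + (n:ℝ)*Real.log ((1-μ)/(1-(μ + max εa (εr*μ))))
          = (n:ℝ) * (-(Hf (μ + max εa (εr*μ)) μ)) := by
        rw [hsid, hwid]; unfold Hf; ring
      rw [hident2]
      nlinarith [mul_le_mul_of_nonneg_left hKA hn'.le]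
    · -- boundary case μ + t = 1
      have key : ∀ s : ℝ, 0 ≤ s →
          (P {ω | (n:ℝ)*(μ + max εa (εr*μ)) ≤ ∑ i, X i ω}).toReal
            ≤ ((1-μ)*Real.exp (-s) + μ)^n := by
        intro s hs
        have hch := chernoff_upper P hmeas hbound hμ0 hμ1 hmean hindep
          ((n:ℝ)*(μ + max εa (εr*μ))) s hs
        refine hch.trans (le_of_eq ?_)
        rw [hA1, mul_one]
        rw [show -s*(n:ℝ) = (n:ℝ)*(-s) by ring, Real.exp_nat_mul, ← mul_pow]
        congr 1
        rw [Real.exp_neg]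
        have := Real.exp_pos s
        field_simp
      have hlim : Filter.Tendsto (fun s : ℝ => ((1-μ)*Real.exp (-s) + μ)^n)
          Filter.atTop (𝓝 (μ^n)) := by
        have h0 : Filter.Tendsto (fun s : ℝ => (1-μ)*Real.exp (-s) + μ)
            Filter.atTop (𝓝 ((1-μ)*0 + μ)) :=
          (Real.tendsto_exp_neg_atTop_nhds_zero.const_mul _).add_const μ
        have := h0.pow n
        simpa using this
      have hle : (P {ω | (n:ℝ)*(μ + max εa (εr*μ)) ≤ ∑ i, X i ω}).toReal ≤ μ^n :=
        ge_of_tendsto hlim (Filter.eventually_atTop.2 ⟨0, fun s hs => key s hs⟩)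
      have hKlog : Hf (εa/εr + εa) (εa/εr) ≤ -Real.log μ := by
        rcases max_cases εa (εr*μ) with ⟨hmx, hge⟩ | ⟨hmx, hlt⟩
        · exfalso
          have hk := hc' hεa hεa1 hεr hεr1 hc
          rw [hmx] at hA1
          nlinarith
        · rw [hmx] at hA1
          have hμeq : Real.log μ = -Real.log (1+εr) := by
            have hprod : μ * (1+εr) = 1 := by ring_nf; linarith
            have hl := Real.log_mul hμ0.ne' (by linarith : (1:ℝ)+εr ≠ 0)
            rw [hprod, Real.log_one] at hl
            linarith
          rw [hμeq, neg_neg]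
          exact K_le_log hεa hεa1 hεr hεr1 hc
      refine hle.trans ?_
      have hμn : μ^n = Real.exp ((n:ℝ)*Real.log μ) := by
        rw [Real.exp_nat_mul, Real.exp_log hμ0]
      rw [hμn]
      apply Real.exp_le_exp.2
      nlinarith [mul_le_mul_of_nonneg_left hKlog hn'.le]
    · have hempty : {ω | (n:ℝ)*(μ + max εa (εr*μ)) ≤ ∑ i, X i ω} = ∅ := by
        ext ω
        simp only [Set.mem_setOf_eq, Set.mem_empty_iff_false, iff_false, not_le]
        have h1 : (n:ℝ)*1 < (n:ℝ)*(μ + max εa (εr*μ)) :=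
          mul_lt_mul_of_pos_left hA1 hn'
        have := hSle ω
        nlinarith
      rw [hempty]
      simp [Real.exp_pos]
      positivity
  -- lower tail bound
  have hL : (P {ω | ∑ i, X i ω ≤ (n:ℝ)*(μ - max εa (εr*μ))}).toReal
      ≤ Real.exp (-((n:ℝ) * Hf (εa/εr + εa) (εa/εr))) := by
    rcases lt_trichotomy (μ - max εa (εr*μ)) 0 with hB1 | hB1 | hB1
    · have hempty : {ω | ∑ i, X i ω ≤ (n:ℝ)*(μ - max εa (εr*μ))} = ∅ := by
        ext ω
        simp only [Set.mem_setOf_eq, Set.mem_empty_iff_false, iff_false, not_le]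
        have h1 : (n:ℝ)*(μ - max εa (εr*μ)) < 0 := mul_neg_of_pos_of_neg hn' hB1
        have := hSnn ω
        linarith
      rw [hempty]
      simp [Real.exp_pos]
      positivity
    · -- boundary case μ - t = 0
      have key : ∀ s : ℝ, 0 ≤ s →
          (P {ω | ∑ i, X i ω ≤ (n:ℝ)*(μ - max εa (εr*μ))}).toReal
            ≤ (1 - μ + μ*Real.exp (-s))^n := by
        intro s hs
        have hch := chernoff_lower P hmeas hbound hμ0 hμ1 hmean hindep
          ((n:ℝ)*(μ - max εa (εr*μ))) s hs
        refine hch.trans (le_of_eq ?_)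
        rw [hB1, mul_zero, mul_zero, Real.exp_zero, one_mul]
      have hlim : Filter.Tendsto (fun s : ℝ => (1 - μ + μ*Real.exp (-s))^n)
          Filter.atTop (𝓝 ((1-μ)^n)) := by
        have h0 : Filter.Tendsto (fun s : ℝ => 1 - μ + μ*Real.exp (-s))
            Filter.atTop (𝓝 (1 - μ + μ*0)) :=
          (Real.tendsto_exp_neg_atTop_nhds_zero.const_mul μ).const_add (1-μ)
        have := h0.pow n
        simpa using this
      have hle : (P {ω | ∑ i, X i ω ≤ (n:ℝ)*(μ - max εa (εr*μ))}).toReal ≤ (1-μ)^n :=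
        ge_of_tendsto hlim (Filter.eventually_atTop.2 ⟨0, fun s hs => key s hs⟩)
      have hKL : Hf (εa/εr + εa) (εa/εr) ≤ Hf (μ - max εa (εr*μ)) μ :=
        K_le_lower hεa hεa1 hεr hεr1 hc μ hμ0 hμ1 (le_of_eq hB1.symm)
      have hHf0 : Hf (μ - max εa (εr*μ)) μ = -Real.log (1-μ) := by
        rw [hB1]
        unfold Hf
        simp [Real.log_zero, Real.log_one]
      refine hle.trans ?_
      have h1μ : (0:ℝ) < 1 - μ := by linarith
      have hμn : (1-μ)^n = Real.exp ((n:ℝ)*Real.log (1-μ)) := by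
        rw [Real.exp_nat_mul, Real.exp_log h1μ]
      rw [hμn]
      apply Real.exp_le_exp.2
      rw [hHf0] at hKL
      nlinarith [mul_le_mul_of_nonneg_left hKL hn'.le]
    · -- interior case μ - t > 0
      have hBμ : μ - max εa (εr*μ) < μ := by linarith
      have h1B : 0 < 1 - (μ - max εa (εr*μ)) := by linarith
      have h1μ : (0:ℝ) < 1 - μ := by linarith
      have hargpos : 0 < μ*(1-(μ - max εa (εr*μ)))/((μ - max εa (εr*μ))*(1-μ)) := by
        positivity
      have hsarg : 1 ≤ μ*(1-(μ - max εa (εr*μ)))/((μ - max εa (εr*μ))*(1-μ)) := by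
        rw [le_div_iff₀ (by positivity)]
        nlinarith
      have hs0 : 0 ≤ Real.log (μ*(1-(μ - max εa (εr*μ)))/((μ - max εa (εr*μ))*(1-μ))) :=
        Real.log_nonneg hsarg
      have hch := chernoff_lower P hmeas hbound hμ0 hμ1 hmean hindep
        ((n:ℝ)*(μ - max εa (εr*μ)))
        (Real.log (μ*(1-(μ - max εa (εr*μ)))/((μ - max εa (εr*μ))*(1-μ)))) hs0
      have hexp_s : Real.exp (-(Real.log (μ*(1-(μ - max εa (εr*μ)))/((μ - max εa (εr*μ))*(1-μ)))))
          = (μ - max εa (εr*μ))*(1-μ)/(μ*(1-(μ - max εa (εr*μ)))) := by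
        rw [Real.exp_neg, Real.exp_log hargpos, inv_div]
      have hmgf : 1 - μ + μ * Real.exp
          (-(Real.log (μ*(1-(μ - max εa (εr*μ)))/((μ - max εa (εr*μ))*(1-μ)))))
          = (1-μ)/(1-(μ - max εa (εr*μ))) := by
        have h1B' : 1 - (μ - max εa (εr*μ)) ≠ 0 := h1B.ne'
        rw [hexp_s]; generalize max εa (εr*μ) = M at h1B' ⊢; field_simp; ring
      rw [hmgf] at hch
      have hw : (0:ℝ) < (1-μ)/(1-(μ - max εa (εr*μ))) := by positivity
      have hpow : ((1-μ)/(1-(μ - max εa (εr*μ))))^n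
          = Real.exp ((n:ℝ) * Real.log ((1-μ)/(1-(μ - max εa (εr*μ))))) := by
        rw [Real.exp_nat_mul, Real.exp_log hw]
      rw [hpow, ← Real.exp_add] at hch
      refine hch.trans (Real.exp_le_exp.2 ?_)
      have hsid : Real.log (μ*(1-(μ - max εa (εr*μ)))/((μ - max εa (εr*μ))*(1-μ)))
          = Real.log μ + Real.log (1-(μ - max εa (εr*μ)))
            - Real.log (μ - max εa (εr*μ)) - Real.log (1-μ) := by
        rw [Real.log_div (by positivity) (by positivity),
          Real.log_mul hμ0.ne' h1B.ne', Real.log_mul (by positivity) h1μ.ne']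
        ring
      have hwid : Real.log ((1-μ)/(1-(μ - max εa (εr*μ))))
          = Real.log (1-μ) - Real.log (1-(μ - max εa (εr*μ))) :=
        Real.log_div h1μ.ne' h1B.ne'
      have hKB : Hf (εa/εr + εa) (εa/εr) ≤ Hf (μ - max εa (εr*μ)) μ :=
        K_le_lower hεa hεa1 hεr hεr1 hc μ hμ0 hμ1 hB1.le
      have hident2 : Real.log (μ*(1-(μ - max εa (εr*μ)))/((μ - max εa (εr*μ))*(1-μ)))
            *((n:ℝ)*(μ - max εa (εr*μ)))
          + (n:ℝ)*Real.log ((1-μ)/(1-(μ - max εa (εr*μ))))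
          = (n:ℝ) * (-(Hf (μ - max εa (εr*μ)) μ)) := by
        rw [hsid, hwid]; unfold Hf; ring
      rw [hident2]
      nlinarith [mul_le_mul_of_nonneg_left hKB hn'.le]
  -- measurability of the target set
  have hTmeas : MeasurableSet {ω | |(∑ i, X i ω) / (n:ℝ) - μ| < εa
      ∨ |((∑ i, X i ω) / (n:ℝ) - μ) / μ| < εr} := by
    have hf : Measurable fun ω => |(∑ i, X i ω) / (n:ℝ) - μ| :=
      ((hSmeas.div_const _).sub measurable_const).abs
    have hg : Measurable fun ω => |((∑ i, X i ω) / (n:ℝ) - μ) / μ| :=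
      (((hSmeas.div_const _).sub measurable_const).div_const _).abs
    exact (measurableSet_lt hf measurable_const).union
      (measurableSet_lt hg measurable_const)
  -- complement inclusion
  have hsub : {ω | |(∑ i, X i ω) / (n:ℝ) - μ| < εa
        ∨ |((∑ i, X i ω) / (n:ℝ) - μ) / μ| < εr}ᶜ
      ⊆ {ω | (n:ℝ)*(μ + max εa (εr*μ)) ≤ ∑ i, X i ω}
        ∪ {ω | ∑ i, X i ω ≤ (n:ℝ)*(μ - max εa (εr*μ))} := by
    intro ω hω
    simp only [Set.mem_compl_iff, Set.mem_setOf_eq, not_or, not_lt] at hω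
    obtain ⟨h1, h2⟩ := hω
    rw [abs_div, abs_of_pos hμ0] at h2
    have h2' : εr * μ ≤ |(∑ i, X i ω) / (n:ℝ) - μ| := by
      rw [le_div_iff₀ hμ0] at h2
      linarith [h2]
    have ht : max εa (εr*μ) ≤ |(∑ i, X i ω) / (n:ℝ) - μ| := max_le h1 h2'
    rcases le_abs.1 ht with hd | hd
    · left
      simp only [Set.mem_setOf_eq]
      have : μ + max εa (εr*μ) ≤ (∑ i, X i ω) / (n:ℝ) := by linarith
      calc (n:ℝ)*(μ + max εa (εr*μ)) ≤ (n:ℝ) * ((∑ i, X i ω) / (n:ℝ)) :=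
          mul_le_mul_of_nonneg_left this hn'.le
        _ = ∑ i, X i ω := by field_simp
    · right
      simp only [Set.mem_setOf_eq]
      have : (∑ i, X i ω) / (n:ℝ) ≤ μ - max εa (εr*μ) := by linarith
      calc ∑ i, X i ω = (n:ℝ) * ((∑ i, X i ω) / (n:ℝ)) := by field_simp
        _ ≤ (n:ℝ)*(μ - max εa (εr*μ)) := mul_le_mul_of_nonneg_left this hn'.le
  -- put everything together
  have hPU := (measure_mono (μ := P) hsub).trans (measure_union_le _ _)
  have hUL : (P ({ω | |(∑ i, X i ω) / (n:ℝ) - μ| < εa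
        ∨ |((∑ i, X i ω) / (n:ℝ) - μ) / μ| < εr}ᶜ)).toReal
      ≤ 2 * Real.exp (-((n:ℝ) * Hf (εa/εr + εa) (εa/εr))) := by
    have hstep : (P ({ω | |(∑ i, X i ω) / (n:ℝ) - μ| < εa
          ∨ |((∑ i, X i ω) / (n:ℝ) - μ) / μ| < εr}ᶜ)).toReal
        ≤ (P {ω | (n:ℝ)*(μ + max εa (εr*μ)) ≤ ∑ i, X i ω}).toReal
          + (P {ω | ∑ i, X i ω ≤ (n:ℝ)*(μ - max εa (εr*μ))}).toReal := by
      rw [← ENNReal.toReal_add (measure_ne_top P _) (measure_ne_top P _)]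
      exact ENNReal.toReal_mono
        (ENNReal.add_ne_top.2 ⟨measure_ne_top P _, measure_ne_top P _⟩) hPU
    linarith
  rw [gt_iff_lt, ENNReal.ofReal_lt_iff_lt_toReal (by linarith) (measure_ne_top P _)]
  have hsum : (P {ω | |(∑ i, X i ω) / (n:ℝ) - μ| < εa
        ∨ |((∑ i, X i ω) / (n:ℝ) - μ) / μ| < εr}).toReal
      + (P ({ω | |(∑ i, X i ω) / (n:ℝ) - μ| < εa
        ∨ |((∑ i, X i ω) / (n:ℝ) - μ) / μ| < εr}ᶜ)).toReal = 1 := by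
    rw [← ENNReal.toReal_add (measure_ne_top P _) (measure_ne_top P _),
      measure_add_measure_compl hTmeas, measure_univ, ENNReal.toReal_one]
  linarith
end
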